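/- For an irreducible Markov chain on a finite state space and pairwise distinct states y, y₁, y₂, one has P_y(τ_{y₁} < τ_{y₂}) = P_y(τ_{y₁} < τ_{{y₂,y}}) / P_y(τ_{{y₁,y₂}} < τ_y), where τ denotes first hitting times (with the convention that the hitting time of the starting point is the first return time). -/

import Mathlib

open MeasureTheory Filter

/-- First hitting time of `A` in positive time (the first return time when the chain starts
in `A`): `inf {t ≥ 1 : ω t ∈ A}`. -/
noncomputable def retTime {X : Type*} (A : Set X) (ω : ℕ → X) : ℕ :=
  sInf {t : ℕ | 0 < t ∧ ω t ∈ A}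

open Matrix Finset

set_option linter.unusedSectionVars false
set_option maxHeartbeats 1000000

namespace Stmt3
variable {X : Type*} [Fintype X] [DecidableEq X]

def QF (p : Matrix X X ℝ) (F : Finset X) : Matrix X X ℝ :=
  Matrix.of fun c d => if d ∈ F then 0 else p c d

lemma QF_nonneg {p : Matrix X X ℝ} (hnn : ∀ a b, 0 ≤ p a b) (F : Finset X) (c d : X) :
    0 ≤ QF p F c d := by
  unfold QF; dsimp; split <;> [rfl; exact hnn c d]

lemma QF_le {p : Matrix X X ℝ} (hnn : ∀ a b, 0 ≤ p a b) (F : Finset X) (c d : X) :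
    QF p F c d ≤ p c d := by
  unfold QF; dsimp; split <;> [exact hnn c d; rfl]

lemma pow_entry_nonneg {M : Matrix X X ℝ} (h : ∀ a b, 0 ≤ M a b) (n : ℕ) :
    ∀ a b, 0 ≤ (M ^ n) a b := by
  induction n with
  | zero => intro a b; simp [Matrix.one_apply]; split <;> norm_num
  | succ n ih =>
      intro a b
      rw [pow_succ, Matrix.mul_apply]
      exact Finset.sum_nonneg fun c _ => mul_nonneg (ih a c) (h c b)

lemma mulVec_nonneg {M : Matrix X X ℝ} (h : ∀ a b, 0 ≤ M a b) {v : X → ℝ}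
    (hv : ∀ d, 0 ≤ v d) (c : X) : 0 ≤ (M *ᵥ v) c :=
  Finset.sum_nonneg fun d _ => mul_nonneg (h c d) (hv d)

lemma mulVec_mono {M : Matrix X X ℝ} (h : ∀ a b, 0 ≤ M a b) {v w : X → ℝ}
    (hvw : ∀ d, v d ≤ w d) (c : X) : (M *ᵥ v) c ≤ (M *ᵥ w) c :=
  Finset.sum_le_sum fun d _ => mul_le_mul_of_nonneg_left (hvw d) (h c d)

/-- First-passage expansion: `(M+C)^m = M^m + sum_{j<m} M^j C (M+C)^{m-1-j}`. -/
lemma expansion (M C : Matrix X X ℝ) (m : ℕ) :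
    (M + C) ^ m = M ^ m + ∑ j ∈ Finset.range m, M ^ j * C * (M + C) ^ (m - 1 - j) := by
  induction m with
  | zero => simp
  | succ m ih =>
      have : (M + C) ^ (m + 1) = M * (M + C) ^ m + C * (M + C) ^ m := by
        rw [pow_succ', add_mul]
      rw [this, ih, Matrix.mul_add, Finset.mul_sum]
      rw [Finset.sum_range_succ']
      have e1 : ∀ j ∈ Finset.range m,
          M ^ (j + 1) * C * (M + C) ^ (m + 1 - 1 - (j + 1)) = M * (M ^ j * C * (M + C) ^ (m - 1 - j)) := by
        intro j hj
        have : m + 1 - 1 - (j + 1) = m - 1 - j := by omega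
        rw [this, pow_succ', mul_assoc, mul_assoc, mul_assoc]
      rw [Finset.sum_congr rfl e1]
      have e0 : M ^ 0 * C * (M + C) ^ (m + 1 - 1 - 0) = C * (M + C) ^ m := by
        simp
      rw [e0, pow_succ', ← ih]
      abel

section Tail
variable {p : Matrix X X ℝ}

lemma exists_pos_factor {f g : X → ℝ} (hf : ∀ d, 0 ≤ f d) (hg : ∀ d, 0 ≤ g d)
    (h : 0 < ∑ d, f d * g d) : ∃ d, 0 < f d ∧ 0 < g d := by
  by_contra hc
  push_neg at hc
  have : ∀ d ∈ Finset.univ, f d * g d ≤ 0 := by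
    intro d _
    rcases lt_or_ge 0 (f d) with h1 | h1
    · have := hc d h1
      exact mul_nonpos_of_nonneg_of_nonpos (hf d) this
    · exact mul_nonpos_of_nonpos_of_nonneg h1 (hg d)
  exact absurd h (not_lt.mpr (Finset.sum_nonpos this))

lemma exists_pos_step (hrow : ∀ a, ∑ b, p a b = 1) (z : X) : ∃ d, 0 < p z d := by
  by_contra hc
  push_neg at hc
  have : (1:ℝ) ≤ 0 := (hrow z) ▸ Finset.sum_nonpos (fun d _ => hc d)
  linarith

lemma reach_pos (hnn : ∀ a b, 0 ≤ p a b) (hrow : ∀ a, ∑ b, p a b = 1)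
    (hirr : ∀ a b : X, ∃ n : ℕ, 0 < (p ^ n) a b) (z f : X) :
    ∃ n, 0 < n ∧ 0 < (p ^ n) z f := by
  obtain ⟨d, hd⟩ := exists_pos_step hrow z
  obtain ⟨n, hn⟩ := hirr d f
  refine ⟨n + 1, Nat.succ_pos n, ?_⟩
  have : p z d * (p ^ n) d f ≤ (p ^ (n+1)) z f := by
    rw [pow_succ', Matrix.mul_apply]
    exact Finset.single_le_sum
      (fun c _ => mul_nonneg (hnn z c) (pow_entry_nonneg hnn n c f)) (Finset.mem_univ d)
  nlinarith

variable (p) in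
/-- `TF p F m z` : probability-weight of avoiding `F` at all times `1..m` starting from `z`. -/
def TF (F : Finset X) (m : ℕ) (z : X) : ℝ := ((QF p F) ^ m *ᵥ fun _ => (1:ℝ)) z

lemma TF_zero (F : Finset X) (z : X) : TF p F 0 z = 1 := by
  simp [TF]

lemma TF_succ (F : Finset X) (m : ℕ) : TF p F (m+1) = (QF p F) *ᵥ (TF p F m) := by
  unfold TF
  rw [pow_succ']
  rw [← Matrix.mulVec_mulVec]

lemma TF_nonneg (hnn : ∀ a b, 0 ≤ p a b) (F : Finset X) (m : ℕ) (z : X) :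
    0 ≤ TF p F m z :=
  mulVec_nonneg (pow_entry_nonneg (QF_nonneg hnn F) m) (fun _ => zero_le_one) z

lemma QF_rowsum_le (hnn : ∀ a b, 0 ≤ p a b) (hrow : ∀ a, ∑ b, p a b = 1)
    (F : Finset X) (z : X) : ∑ d, QF p F z d ≤ 1 :=
  (hrow z) ▸ Finset.sum_le_sum fun d _ => QF_le hnn F z d

lemma TF_le_one (hnn : ∀ a b, 0 ≤ p a b) (hrow : ∀ a, ∑ b, p a b = 1)
    (F : Finset X) (m : ℕ) (z : X) : TF p F m z ≤ 1 := by
  induction m generalizing z with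
  | zero => simp [TF_zero]
  | succ m ih =>
      rw [TF_succ]
      calc (QF p F *ᵥ TF p F m) z ≤ (QF p F *ᵥ fun _ => (1:ℝ)) z :=
            mulVec_mono (QF_nonneg hnn F) ih z
        _ = ∑ d, QF p F z d := by simp [Matrix.mulVec, dotProduct]
        _ ≤ 1 := QF_rowsum_le hnn hrow F z

lemma TF_antitone (hnn : ∀ a b, 0 ≤ p a b) (hrow : ∀ a, ∑ b, p a b = 1)
    (F : Finset X) {m n : ℕ} (hmn : m ≤ n) (z : X) : TF p F n z ≤ TF p F m z := by
  induction n with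
  | zero =>
      have : m = 0 := by omega
      subst this; rfl
  | succ n ih =>
      rcases Nat.lt_or_ge m (n+1) with h | h
      · have hmn' : m ≤ n := by omega
        have step : ∀ z, TF p F (n+1) z ≤ TF p F n z := by
          clear hmn h hmn' ih
          induction n with
          | zero =>
              intro z
              rw [TF_succ, TF_zero]
              calc (QF p F *ᵥ TF p F 0) z = ∑ d, QF p F z d := by
                    simp [Matrix.mulVec, dotProduct, TF_zero]
                _ ≤ 1 := QF_rowsum_le hnn hrow F z
          | succ n ihn =>
              intro z
              calc TF p F (n+1+1) z = (QF p F *ᵥ TF p F (n+1)) z := by rw [TF_succ F (n+1)]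
                _ ≤ (QF p F *ᵥ TF p F n) z := mulVec_mono (QF_nonneg hnn F) ihn z
                _ = TF p F (n+1) z := by rw [← TF_succ F n]
        exact le_trans (step z) (ih hmn')
      · have : m = n+1 := by omega
        subst this; rfl

lemma TF_one_lt (hnn : ∀ a b, 0 ≤ p a b) (hrow : ∀ a, ∑ b, p a b = 1)
    {F : Finset X} {z d : X} (hd : d ∈ F) (hpd : 0 < p z d) : TF p F 1 z < 1 := by
  have h1 : TF p F 1 z = ∑ d', QF p F z d' := by
    simp [TF, Matrix.mulVec, dotProduct]
  have h2 : ∑ d', QF p F z d' = QF p F z d + ∑ d' ∈ Finset.univ.erase d, QF p F z d' :=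
    (Finset.add_sum_erase _ _ (Finset.mem_univ d)).symm
  have h3 : QF p F z d = 0 := by simp [QF, hd]
  have h4 : ∑ d' ∈ Finset.univ.erase d, QF p F z d' ≤ ∑ d' ∈ Finset.univ.erase d, p z d' :=
    Finset.sum_le_sum fun d' _ => QF_le hnn F z d'
  have h5 : p z d + ∑ d' ∈ Finset.univ.erase d, p z d' = 1 :=
    (Finset.add_sum_erase _ _ (Finset.mem_univ d)).trans (hrow z)
  rw [h1, h2, h3]
  linarith

lemma TF_hit_lt (hnn : ∀ a b, 0 ≤ p a b) (hrow : ∀ a, ∑ b, p a b = 1)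
    {F : Finset X} {h : X} (hh : h ∈ F) :
    ∀ n z, 0 < (p ^ (n+1)) z h → TF p F (n+1) z < 1 := by
  intro n
  induction n with
  | zero =>
      intro z hz
      rw [pow_one] at hz
      exact TF_one_lt hnn hrow hh hz
  | succ n ih =>
      intro z hz
      rw [pow_succ', Matrix.mul_apply] at hz
      obtain ⟨d, hd1, hd2⟩ := exists_pos_factor (fun d => hnn z d)
        (fun d => pow_entry_nonneg hnn (n+1) d h) hz
      by_cases hdF : d ∈ F
      · exact lt_of_le_of_lt (TF_antitone hnn hrow F (by omega) z) (TF_one_lt hnn hrow hdF hd1)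
      · have ihd := ih d hd2
        have key : TF p F (n+2) z ≤ 1 - p z d * (1 - TF p F (n+1) d) := by
          rw [TF_succ]
          have e1 : (QF p F *ᵥ TF p F (n+1)) z
              = QF p F z d * TF p F (n+1) d
                + ∑ d' ∈ Finset.univ.erase d, QF p F z d' * TF p F (n+1) d' := by
            simp only [Matrix.mulVec, dotProduct]
            exact (Finset.add_sum_erase _ _ (Finset.mem_univ d)).symm
          have e2 : ∑ d' ∈ Finset.univ.erase d, QF p F z d' * TF p F (n+1) d'
              ≤ ∑ d' ∈ Finset.univ.erase d, p z d' := by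
            refine Finset.sum_le_sum fun d' _ => ?_
            calc QF p F z d' * TF p F (n+1) d' ≤ QF p F z d' * 1 :=
                  mul_le_mul_of_nonneg_left (TF_le_one hnn hrow F (n+1) d') (QF_nonneg hnn F z d')
              _ = QF p F z d' := mul_one _
              _ ≤ p z d' := QF_le hnn F z d'
          have e3 : QF p F z d = p z d := by simp [QF, hdF]
          have e5 : p z d + ∑ d' ∈ Finset.univ.erase d, p z d' = 1 :=
            (Finset.add_sum_erase _ _ (Finset.mem_univ d)).trans (hrow z)
          rw [e1, e3]
          nlinarith [TF_le_one hnn hrow F (n+1) d]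
        nlinarith

/-- The key recurrence estimate: avoiding a nonempty target set forever has vanishing weight. -/
lemma TF_small (hnn : ∀ a b, 0 ≤ p a b) (hrow : ∀ a, ∑ b, p a b = 1)
    (hirr : ∀ a b : X, ∃ n : ℕ, 0 < (p ^ n) a b)
    {F : Finset X} {h : X} (hh : h ∈ F) (y : X) :
    ∀ ε : ℝ, 0 < ε → ∃ m, TF p F m y < ε := by
  -- choose for each z a positive-probability time to reach h
  have hz : ∀ z : X, ∃ n, 0 < n ∧ 0 < (p ^ n) z h := fun z => reach_pos hnn hrow hirr z h
  choose g hg1 hg2 using hz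
  set N := Finset.univ.sup g with hN
  have hNz : ∀ z, TF p F N z < 1 := by
    intro z
    have h1 : g z ≤ N := Finset.le_sup (Finset.mem_univ z)
    have h2 : TF p F N z ≤ TF p F (g z) z := TF_antitone hnn hrow F h1 z
    have h3 : TF p F (g z) z < 1 := by
      obtain ⟨k, hk⟩ : ∃ k, g z = k + 1 := ⟨g z - 1, by have := hg1 z; omega⟩
      rw [hk]; exact TF_hit_lt hnn hrow hh k z (hk ▸ hg2 z)
    linarith
  have hne : Nonempty X := ⟨h⟩
  obtain ⟨z₀⟩ := hne
  set θ := Finset.univ.sup' ⟨z₀, Finset.mem_univ z₀⟩ (fun z => TF p F N z) with hθ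
  have hθ1 : θ < 1 := by
    rw [hθ]
    exact (Finset.sup'_lt_iff _).mpr fun z _ => hNz z
  have hθ0 : 0 ≤ θ := le_trans (TF_nonneg hnn F N z₀) (Finset.le_sup' _ (Finset.mem_univ z₀))
  have hθle : ∀ z, TF p F N z ≤ θ := fun z => Finset.le_sup' _ (Finset.mem_univ z)
  -- submultiplicativity
  have hsub : ∀ m z, TF p F (m + N) z ≤ θ * TF p F m z := by
    intro m z
    have e1 : TF p F (m + N) z = ((QF p F)^m *ᵥ TF p F N) z := by
      unfold TF
      rw [pow_add, ← Matrix.mulVec_mulVec]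
    have e2 : ((QF p F)^m *ᵥ TF p F N) z ≤ ((QF p F)^m *ᵥ fun _ => θ) z :=
      mulVec_mono (pow_entry_nonneg (QF_nonneg hnn F) m) hθle z
    have e3 : ((QF p F)^m *ᵥ fun _ => θ) z = θ * TF p F m z := by
      unfold TF
      simp only [Matrix.mulVec, dotProduct, Finset.mul_sum]
      exact Finset.sum_congr rfl fun d _ => by ring
    rw [e1]; linarith
  have hgeo : ∀ k, TF p F (k * N) y ≤ θ ^ k := by
    intro k
    induction k with
    | zero => simp [TF_zero]
    | succ k ih =>
        have : (k+1) * N = k * N + N := by ring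
        rw [this, pow_succ]
        calc TF p F (k * N + N) y ≤ θ * TF p F (k * N) y := hsub _ y
          _ ≤ θ * θ ^ k := mul_le_mul_of_nonneg_left ih hθ0
          _ = θ ^ k * θ := mul_comm _ _
  intro ε hε
  obtain ⟨k, hk⟩ := exists_pow_lt_of_lt_one hε hθ1
  exact ⟨k * N, lt_of_le_of_lt (hgeo k) hk⟩


end Tail

section Separation
variable [MeasurableSpace X] {p : Matrix X X ℝ}

lemma invariance {a b : X}
    (hsep : ∀ S : Set X, MeasurableSet S → (a ∈ S ↔ b ∈ S)) (k : ℕ)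
    {T : Set (ℕ → X)} (hT : MeasurableSet T) :
    (fun ω : ℕ → X => fun i => if i = k then Equiv.swap a b (ω i) else ω i) ⁻¹' T = T := by
  set σ := Equiv.swap a b with hσ
  have hσS : ∀ S : Set X, MeasurableSet S → σ ⁻¹' S = S := by
    intro S hS
    ext x
    simp only [Set.mem_preimage]
    rcases eq_or_ne x a with rfl | hxa
    · rw [hσ, Equiv.swap_apply_left]; exact (hsep S hS).symm
    · rcases eq_or_ne x b with rfl | hxb
      · rw [hσ, Equiv.swap_apply_right]; exact hsep S hS
      · rw [hσ, Equiv.swap_apply_of_ne_of_ne hxa hxb]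
  set Φ : (ℕ → X) → (ℕ → X) := fun ω => fun i => if i = k then σ (ω i) else ω i with hΦ
  have hT' : MeasurableSet[⨆ i : ℕ,
      MeasurableSpace.comap (fun ω : ℕ → X => ω i) ‹MeasurableSpace X›] T := hT
  rw [MeasurableSpace.measurableSet_iSup] at hT'
  clear hT
  induction hT' with
  | basic u hu =>
      obtain ⟨i, hi⟩ := hu
      obtain ⟨S, hS, rfl⟩ := hi
      rcases eq_or_ne i k with rfl | hik
      · have : Φ ⁻¹' ((fun ω : ℕ → X => ω i) ⁻¹' S) = (fun ω : ℕ → X => ω i) ⁻¹' (σ ⁻¹' S) := by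
          ext ω
          simp [hΦ, Set.mem_preimage]
        rw [this, hσS S hS]
      · ext ω
        simp [hΦ, Set.mem_preimage, hik]
  | empty => simp
  | compl t _ iht => rw [Set.preimage_compl, iht]
  | iUnion f _ ihf =>
      rw [Set.preimage_iUnion]
      exact Set.iUnion_congr ihf

variable (P : X → Measure (ℕ → X))

lemma pair_sep
    (hnn : ∀ a b, 0 ≤ p a b) (hrow : ∀ a, ∑ b, p a b = 1)
    (hirr : ∀ a b : X, ∃ n : ℕ, 0 < (p ^ n) a b)
    (hprob : ∀ x, IsProbabilityMeasure (P x))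
    (hP : ∀ (x : X) (n : ℕ) (f : ℕ → X), f 0 = x →
      P x {ω | ∀ i ≤ n, ω i = f i}
        = ∏ i ∈ Finset.range n, ENNReal.ofReal (p (f i) (f (i+1))))
    (a b : X) (hab : a ≠ b) :
    ∃ U : Set X, MeasurableSet U ∧ a ∈ U ∧ b ∉ U := by
  by_contra hc
  push_neg at hc
  have hsep : ∀ S : Set X, MeasurableSet S → (a ∈ S ↔ b ∈ S) := by
    intro S hS
    constructor
    · intro ha
      by_contra hb
      exact hb (hc S hS ha)
    · intro hb
      by_contra ha
      have := hc Sᶜ hS.compl (by simpa using ha)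
      simp at this
      exact this hb
  -- get a predecessor d of a with positive transition probability
  obtain ⟨d, hd⟩ : ∃ d, 0 < p d a := by
    obtain ⟨n, hn1, hn2⟩ := reach_pos hnn hrow hirr b a
    obtain ⟨m, rfl⟩ : ∃ m, n = m + 1 := ⟨n - 1, by omega⟩
    rw [pow_succ, Matrix.mul_apply] at hn2
    obtain ⟨d, _, hd2⟩ := exists_pos_factor
      (fun c => pow_entry_nonneg hnn m b c) (fun c => hnn c a) hn2
    exact ⟨d, hd2⟩
  haveI := hprob d
  -- cylinders of length 1 from d
  set C : X → Set (ℕ → X) :=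
    fun z => {ω | ∀ i ≤ 1, ω i = (fun j => if j = 0 then d else z) i} with hC
  have hCmeas : ∀ z, P d (C z) = ENNReal.ofReal (p d z) := by
    intro z
    have := hP d 1 (fun j => if j = 0 then d else z) (by simp)
    simpa using this
  have hCmem : ∀ (ω : ℕ → X), ω 0 = d → ω ∈ C (ω 1) := by
    intro ω h0
    intro i hi
    interval_cases i <;> simp [h0]
  have hbase : P d {ω : ℕ → X | ω 0 = d} = 1 := by
    have := hP d 0 (fun _ => d) rfl
    have hset : {ω : ℕ → X | ∀ i ≤ 0, ω i = d} = {ω : ℕ → X | ω 0 = d} := by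
      ext ω
      constructor
      · intro h; exact h 0 le_rfl
      · intro h i hi
        have : i = 0 := by omega
        rw [this]; exact h
    rw [hset] at this
    simpa using this
  -- the swap-at-coordinate-1 symmetry puts C b inside any measurable hull of C a
  have hswap : ∀ {T : Set (ℕ → X)}, MeasurableSet T → C a ⊆ T → C b ⊆ T := by
    intro T hT hsub ω hω
    have hΦω : (fun i => if i = 1 then Equiv.swap a b (ω i) else ω i) ∈ C a := by
      intro i hi
      interval_cases i
      · simpa using hω 0 (by norm_num)
      · have := hω 1 le_rfl
        simp at this
        simp [this]
    have := hsub hΦω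
    rw [← invariance hsep 1 hT]
    exact this
  have hswap' : ∀ {T : Set (ℕ → X)}, MeasurableSet T → C b ⊆ T → C a ⊆ T := by
    intro T hT hsub ω hω
    have hΦω : (fun i => if i = 1 then Equiv.swap a b (ω i) else ω i) ∈ C b := by
      intro i hi
      interval_cases i
      · simpa using hω 0 (by norm_num)
      · have := hω 1 le_rfl
        simp at this
        simp [this]
    have := hsub hΦω
    rw [← invariance hsep 1 hT]
    exact this
  -- step 1 : p d b = 0
  have hpdb : p d b = 0 := by
    by_contra hne
    have hpdb' : 0 < p d b := lt_of_le_of_ne (hnn d b) (Ne.symm hne)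
    set H := toMeasurable (P d) (C a) with hH
    have hHmeas : MeasurableSet H := measurableSet_toMeasurable _ _
    have hHval : P d H = ENNReal.ofReal (p d a) := by
      rw [hH, measure_toMeasurable, hCmeas]
    have hCbH : C b ⊆ H := hswap hHmeas (subset_toMeasurable _ _)
    set s : Finset X := (Finset.univ.erase a).erase b with hs
    have hcover : {ω : ℕ → X | ω 0 = d} ⊆ H ∪ ⋃ z ∈ s, C z := by
      intro ω h0
      have hmem := hCmem ω h0
      rcases eq_or_ne (ω 1) a with h1 | h1
      · left; exact subset_toMeasurable _ _ (h1 ▸ hmem)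
      · rcases eq_or_ne (ω 1) b with h2 | h2
        · left; exact hCbH (h2 ▸ hmem)
        · right
          refine Set.mem_biUnion ?_ hmem
          rw [hs]
          exact Finset.mem_erase.mpr ⟨h2, Finset.mem_erase.mpr ⟨h1, Finset.mem_univ _⟩⟩
    have hub : (1:ENNReal) ≤ ENNReal.ofReal (p d a) + ∑ z ∈ s, ENNReal.ofReal (p d z) := by
      calc (1:ENNReal) = P d {ω : ℕ → X | ω 0 = d} := hbase.symm
        _ ≤ P d (H ∪ ⋃ z ∈ s, C z) := measure_mono hcover
        _ ≤ P d H + P d (⋃ z ∈ s, C z) := measure_union_le _ _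
        _ ≤ P d H + ∑ z ∈ s, P d (C z) := by
            gcongr
            exact measure_biUnion_finset_le _ _
        _ = ENNReal.ofReal (p d a) + ∑ z ∈ s, ENNReal.ofReal (p d z) := by
            rw [hHval]
            congr 1
            exact Finset.sum_congr rfl fun z _ => hCmeas z
    have hsum : p d a + ∑ z ∈ s, p d z = 1 - p d b := by
      have h1 : p d b + ∑ z ∈ (Finset.univ.erase b), p d z = 1 :=
        (Finset.add_sum_erase _ _ (Finset.mem_univ b)).trans (hrow d)
      have h2 : p d a + ∑ z ∈ s, p d z = ∑ z ∈ (Finset.univ.erase b), p d z := by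
        rw [hs, Finset.erase_right_comm]
        exact Finset.add_sum_erase _ _ (Finset.mem_erase.mpr ⟨hab, Finset.mem_univ a⟩)
      linarith
    have hreal : ENNReal.ofReal (p d a) + ∑ z ∈ s, ENNReal.ofReal (p d z)
        = ENNReal.ofReal (1 - p d b) := by
      rw [← ENNReal.ofReal_sum_of_nonneg (fun z _ => hnn d z),
        ← ENNReal.ofReal_add (hnn d a) (Finset.sum_nonneg fun z _ => hnn d z), hsum]
    have : (1:ENNReal) ≤ ENNReal.ofReal (1 - p d b) := hreal ▸ hub
    have : (1:ℝ) ≤ 1 - p d b := by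
      have h1 : ENNReal.ofReal (1 - p d b) < 1 := by
        rw [ENNReal.ofReal_lt_one]
        linarith
      exact absurd (lt_of_le_of_lt this h1) (lt_irrefl _)
    linarith
  -- step 2 : contradiction with p d a > 0
  set H' := toMeasurable (P d) (C b) with hH'
  have hH'meas : MeasurableSet H' := measurableSet_toMeasurable _ _
  have hH'val : P d H' = 0 := by
    rw [hH', measure_toMeasurable, hCmeas, hpdb]
    simp
  have : P d (C a) = 0 :=
    le_antisymm (le_trans (measure_mono (hswap' hH'meas (subset_toMeasurable _ _))) hH'val.le)
      zero_le
  rw [hCmeas] at this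
  rw [ENNReal.ofReal_eq_zero] at this
  linarith

lemma allMeasurable
    (hnn : ∀ a b, 0 ≤ p a b) (hrow : ∀ a, ∑ b, p a b = 1)
    (hirr : ∀ a b : X, ∃ n : ℕ, 0 < (p ^ n) a b)
    (hprob : ∀ x, IsProbabilityMeasure (P x))
    (hP : ∀ (x : X) (n : ℕ) (f : ℕ → X), f 0 = x →
      P x {ω | ∀ i ≤ n, ω i = f i}
        = ∏ i ∈ Finset.range n, ENNReal.ofReal (p (f i) (f (i+1))))
    (S : Set X) : MeasurableSet S := by
  have hsingle : ∀ a : X, MeasurableSet ({a} : Set X) := by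
    intro a
    have hU : ∀ b : X, ∃ U : Set X, MeasurableSet U ∧ a ∈ U ∧ (b ≠ a → b ∉ U) := by
      intro b
      rcases eq_or_ne b a with rfl | hba
      · exact ⟨Set.univ, MeasurableSet.univ, Set.mem_univ _, fun h => absurd rfl h⟩
      · obtain ⟨U, hU, haU, hbU⟩ := pair_sep P hnn hrow hirr hprob hP a b (Ne.symm hba)
        exact ⟨U, hU, haU, fun _ => hbU⟩
    choose U hUm hUa hUb using hU
    have : ({a} : Set X) = ⋂ b, U b := by
      ext x
      simp only [Set.mem_singleton_iff, Set.mem_iInter]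
      constructor
      · rintro rfl b; exact hUa b
      · intro h
        by_contra hx
        exact hUb x hx (h x)
    rw [this]
    exact MeasurableSet.iInter fun b => hUm b
  have : S = ⋃ a ∈ S, {a} := by ext x; simp
  rw [this]
  exact MeasurableSet.biUnion (Set.to_countable S) fun a _ => hsingle a

end Separation
section Sums
variable {p : Matrix X X ℝ}

variable (p) in
/-- weight of a finite path -/
def wtF (m : ℕ) (g : Fin (m+1) → X) : ℝ := ∏ i : Fin m, p (g i.castSucc) (g i.succ)

lemma sum_cons_split (k : ℕ) (Φ : (Fin (k+2) → X) → ℝ) :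
    ∑ g : Fin (k+2) → X, Φ g = ∑ z : X, ∑ t : Fin (k+1) → X, Φ (Fin.cons z t) := by
  calc ∑ g : Fin (k + 2) → X, Φ g
      = ∑ q : X × (Fin (k+1) → X), Φ (Fin.cons q.1 q.2) :=
        (Fintype.sum_equiv (Fin.consEquiv (fun _ => X)) _ _ (fun q => rfl)).symm
    _ = ∑ z : X, ∑ t : Fin (k + 1) → X, Φ (Fin.cons z t) := by exact Fintype.sum_prod_type _

lemma sum_snoc_split (k : ℕ) (Φ : (Fin (k+2) → X) → ℝ) :
    ∑ g : Fin (k+2) → X, Φ g = ∑ z : X, ∑ t : Fin (k+1) → X, Φ (Fin.snoc t z) := by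
  calc ∑ g : Fin (k + 2) → X, Φ g
      = ∑ q : X × (Fin (k+1) → X), Φ (Fin.snoc q.2 q.1) :=
        (Fintype.sum_equiv (Fin.snocEquiv (fun _ => X)) _ _ (fun q => rfl)).symm
    _ = ∑ z : X, ∑ t : Fin (k + 1) → X, Φ (Fin.snoc t z) := by exact Fintype.sum_prod_type _

lemma wtF_cons (k : ℕ) (z : X) (t : Fin (k+1) → X) :
    wtF p (k+1) (Fin.cons z t) = p z (t 0) * wtF p k t := by
  unfold wtF
  rw [Fin.prod_univ_succ]
  congr 1

lemma wtF_snoc (k : ℕ) (z : X) (t : Fin (k+1) → X) :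
    wtF p (k+1) (Fin.snoc t z) = wtF p k t * p (t (Fin.last k)) z := by
  unfold wtF
  rw [Fin.prod_univ_castSucc]
  congr 1
  · refine Finset.prod_congr rfl fun j _ => ?_
    rw [Fin.succ_castSucc, Fin.snoc_castSucc, Fin.snoc_castSucc]
  · rw [Fin.snoc_castSucc, Fin.succ_last, Fin.snoc_last]


/-- Core path-sum identity, avoiding `F` at every index (head is the extra state `c`). -/
lemma L1' (F : Finset X) (v : X → ℝ) :
    ∀ (n : ℕ) (c : X),
      (∑ h : Fin (n+1) → X, if (∀ i, h i ∉ F)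
          then p c (h 0) * wtF p n h * v (h (Fin.last n)) else 0)
        = ((QF p F) ^ (n+1) *ᵥ v) c := by
  intro n
  induction n with
  | zero =>
      intro c
      have e1 : (∑ h : Fin (0+1) → X, if (∀ i, h i ∉ F)
            then p c (h 0) * wtF p 0 h * v (h (Fin.last 0)) else 0)
          = ∑ z : X, (if z ∉ F then p c z * v z else 0) := by
        refine Fintype.sum_equiv (Equiv.funUnique (Fin 1) X) _ _ (fun h => ?_)
        have h1 : (∀ i : Fin 1, h i ∉ F) ↔ h 0 ∉ F := by
          constructor
          · intro hh; exact hh 0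
          · intro hh i; rw [Fin.eq_zero i]; exact hh
        have h2 : wtF p 0 h = 1 := by simp [wtF]
        have h3 : (Equiv.funUnique (Fin 1) X) h = h 0 := rfl
        rw [h3]
        by_cases hh : h 0 ∉ F
        · rw [if_pos (h1.mpr hh), if_pos hh, h2]
          have : h (Fin.last 0) = h 0 := rfl
          rw [this]; ring
        · rw [if_neg (fun hc => hh (h1.mp hc)), if_neg hh]
      rw [e1, show ((QF p F)^(0+1)) = QF p F from pow_one _]
      rw [Matrix.mulVec, dotProduct]
      refine Finset.sum_congr rfl fun z _ => ?_
      by_cases hz : z ∈ F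
      · simp [QF, hz]
      · simp [QF, hz]
  | succ n ih =>
      intro c
      rw [sum_cons_split]
      have hterm : ∀ z : X, ∑ t : Fin (n+1) → X,
          (if (∀ i, (Fin.cons z t : Fin (n+2) → X) i ∉ F)
            then p c ((Fin.cons z t : Fin (n+2) → X) 0) * wtF p (n+1) (Fin.cons z t)
              * v ((Fin.cons z t : Fin (n+2) → X) (Fin.last (n+1))) else 0)
          = if z ∉ F then p c z * ((QF p F ^ (n+1)) *ᵥ v) z else 0 := by
        intro z
        by_cases hz : z ∈ F
        · rw [if_neg (by simp [hz])]
          refine Finset.sum_eq_zero fun t _ => ?_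
          rw [if_neg]
          intro hc
          exact (by simpa using hc 0 : z ∉ F) hz
        · rw [if_pos hz, ← ih z, Finset.mul_sum]
          refine Finset.sum_congr rfl fun t _ => ?_
          have hcond : (∀ i, (Fin.cons z t : Fin (n+2) → X) i ∉ F) ↔ (∀ i, t i ∉ F) := by
            rw [Fin.forall_fin_succ]
            simp [hz]
          by_cases ht : ∀ i, t i ∉ F
          · rw [if_pos (hcond.mpr ht), if_pos ht]
            rw [wtF_cons]
            have e0 : (Fin.cons z t : Fin (n+2) → X) 0 = z := rfl
            have e1 : (Fin.cons z t : Fin (n+2) → X) (Fin.last (n+1)) = t (Fin.last n) := by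
              rw [← Fin.succ_last, Fin.cons_succ]
            rw [e0, e1]
            ring
          · rw [if_neg (fun hc => ht (hcond.mp hc)), if_neg ht, mul_zero]
      rw [Finset.sum_congr rfl (fun z _ => hterm z)]
      rw [show ((QF p F)^(n+2)) = QF p F * (QF p F)^(n+1) by rw [pow_succ']]
      rw [← Matrix.mulVec_mulVec]
      rw [Matrix.mulVec, dotProduct]
      refine Finset.sum_congr rfl fun z _ => ?_
      by_cases hz : z ∈ F
      · simp [QF, hz]
      · simp [QF, hz]

/-- Path sums, with taboo `F` at all positive indices and a terminal weight. -/
lemma Lpub (F : Finset X) (v : X → ℝ) :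
    ∀ (k : ℕ) (c : X),
      (∑ g : Fin (k+1) → X, if (g 0 = c ∧ ∀ i : Fin (k+1), 0 < (i:ℕ) → g i ∉ F)
          then wtF p k g * v (g (Fin.last k)) else 0)
        = ((QF p F) ^ k *ᵥ v) c := by
  intro k
  match k with
  | 0 =>
    intro c
    have e1 : (∑ g : Fin (0+1) → X, if (g 0 = c ∧ ∀ i : Fin (0+1), 0 < (i:ℕ) → g i ∉ F)
          then wtF p 0 g * v (g (Fin.last 0)) else 0)
        = ∑ z : X, (if z = c then v z else 0) := by
      refine Fintype.sum_equiv (Equiv.funUnique (Fin 1) X) _ _ (fun h => ?_)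
      have h2 : wtF p 0 h = 1 := by simp [wtF]
      have h3 : (Equiv.funUnique (Fin 1) X) h = h 0 := rfl
      have h4 : ∀ i : Fin 1, ¬ (0 < (i:ℕ)) := by
        intro i; rw [Fin.eq_zero i]; norm_num
      rw [h3]
      by_cases hh : h 0 = c
      · rw [if_pos ⟨hh, fun i hi => absurd hi (h4 i)⟩, if_pos hh, h2]
        have : h (Fin.last 0) = h 0 := rfl
        rw [this]; ring
      · rw [if_neg (fun hc => hh hc.1), if_neg hh]
    rw [e1, pow_zero, Matrix.one_mulVec]
    simp
  | (n+1) =>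
    intro c
    rw [sum_cons_split]
    have hterm : ∀ z : X, ∑ t : Fin (n+1) → X,
        (if ((Fin.cons z t : Fin (n+2) → X) 0 = c
              ∧ ∀ i : Fin (n+2), 0 < (i:ℕ) → (Fin.cons z t : Fin (n+2) → X) i ∉ F)
          then wtF p (n+1) (Fin.cons z t)
            * v ((Fin.cons z t : Fin (n+2) → X) (Fin.last (n+1))) else 0)
        = if z = c then ((QF p F ^ (n+1)) *ᵥ v) z else 0 := by
      intro z
      by_cases hz : z = c
      · rw [if_pos hz, ← L1' F v n z]
        refine Finset.sum_congr rfl fun t _ => ?_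
        have hcond : ((Fin.cons z t : Fin (n+2) → X) 0 = c
              ∧ ∀ i : Fin (n+2), 0 < (i:ℕ) → (Fin.cons z t : Fin (n+2) → X) i ∉ F)
            ↔ (∀ i, t i ∉ F) := by
          constructor
          · intro ⟨_, hall⟩ i
            have := hall i.succ (by simp)
            rwa [Fin.cons_succ] at this
          · intro ht
            refine ⟨hz ▸ rfl, fun i hi => ?_⟩
            rcases Fin.eq_zero_or_eq_succ i with rfl | ⟨j, rfl⟩
            · simp at hi
            · rw [Fin.cons_succ]; exact ht j
        by_cases ht : ∀ i, t i ∉ F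
        · rw [if_pos (hcond.mpr ht), if_pos ht]
          rw [wtF_cons]
          have e1 : (Fin.cons z t : Fin (n+2) → X) (Fin.last (n+1)) = t (Fin.last n) := by
            rw [← Fin.succ_last, Fin.cons_succ]
          rw [e1, hz]
        · rw [if_neg (fun hc => ht (hcond.mp hc)), if_neg ht]
      · rw [if_neg hz]
        refine Finset.sum_eq_zero fun t _ => ?_
        rw [if_neg]
        intro hc
        exact hz (by simpa using hc.1)
    rw [Finset.sum_congr rfl (fun z _ => hterm z)]
    rw [Finset.sum_ite_eq' Finset.univ c fun z => ((QF p F ^ (n+1)) *ᵥ v) z]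
    rw [if_pos (Finset.mem_univ c)]

end Sums
section Meas
open scoped Classical
variable [MeasurableSpace X] {p : Matrix X X ℝ} (P : X → Measure (ℕ → X))

def extend (m : ℕ) (g : Fin (m+1) → X) : ℕ → X :=
  fun i => g ⟨min i m, Nat.lt_succ_of_le (min_le_right i m)⟩

lemma extend_le (m : ℕ) (g : Fin (m+1) → X) {i : ℕ} (hi : i ≤ m) :
    extend m g i = g ⟨i, Nat.lt_succ_of_le hi⟩ := by
  unfold extend
  congr 1
  exact Fin.ext (by simp [min_eq_left hi])

def Cyl (m : ℕ) (g : Fin (m+1) → X) : Set (ℕ → X) := {ω | ∀ i ≤ m, ω i = extend m g i}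

lemma wtF_nonneg (hnn : ∀ a b, 0 ≤ p a b) (m : ℕ) (g : Fin (m+1) → X) : 0 ≤ wtF p m g :=
  Finset.prod_nonneg fun i _ => hnn _ _

lemma cyl_meas (hms : ∀ S : Set X, MeasurableSet S) (m : ℕ) (g : Fin (m+1) → X) :
    MeasurableSet (Cyl m g) := by
  have : Cyl m g = ⋂ (i : ℕ), ⋂ (_ : i ≤ m), (fun ω : ℕ → X => ω i) ⁻¹' {extend m g i} := by
    ext ω; simp [Cyl]
  rw [this]
  exact MeasurableSet.iInter fun i => MeasurableSet.iInter fun _ =>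
    (measurable_pi_apply i) (hms _)

lemma cyl_disj (m : ℕ) {g g' : Fin (m+1) → X} (h : g ≠ g') :
    Disjoint (Cyl m g) (Cyl m g') := by
  rw [Set.disjoint_left]
  intro ω hω hω'
  apply h
  funext i
  have h1 := hω i.val (by omega)
  have h2 := hω' i.val (by omega)
  rw [extend_le m g (by omega)] at h1
  rw [extend_le m g' (by omega)] at h2
  have he : (⟨i.val, by omega⟩ : Fin (m+1)) = i := Fin.ext rfl
  rw [he] at h1 h2
  exact h1.symm.trans h2

lemma cyl_val
    (hP : ∀ (x : X) (n : ℕ) (f : ℕ → X), f 0 = x →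
      P x {ω | ∀ i ≤ n, ω i = f i}
        = ∏ i ∈ Finset.range n, ENNReal.ofReal (p (f i) (f (i+1))))
    (hnn : ∀ a b, 0 ≤ p a b)
    {x : X} (m : ℕ) (g : Fin (m+1) → X) (hg : g 0 = x) :
    P x (Cyl m g) = ENNReal.ofReal (wtF p m g) := by
  have h0 : extend m g 0 = x := by
    rw [extend_le m g (Nat.zero_le m)]
    exact hg
  have := hP x m (extend m g) h0
  have hprod : ∏ i ∈ Finset.range m, ENNReal.ofReal (p (extend m g i) (extend m g (i+1)))
      = ENNReal.ofReal (wtF p m g) := by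
    rw [← ENNReal.ofReal_prod_of_nonneg (fun i _ => hnn _ _)]
    congr 1
    rw [← Fin.prod_univ_eq_prod_range (fun i => p (extend m g i) (extend m g (i+1))) m]
    refine Finset.prod_congr rfl fun i _ => ?_
    rw [extend_le m g (by omega), extend_le m g (by omega)]
    congr 1
  rw [← hprod]
  exact this

lemma base_one
    (hP : ∀ (x : X) (n : ℕ) (f : ℕ → X), f 0 = x →
      P x {ω | ∀ i ≤ n, ω i = f i}
        = ∏ i ∈ Finset.range n, ENNReal.ofReal (p (f i) (f (i+1))))
    (x : X) : P x {ω : ℕ → X | ω 0 = x} = 1 := by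
  have := hP x 0 (fun _ => x) rfl
  have hset : {ω : ℕ → X | ∀ i ≤ 0, ω i = x} = {ω : ℕ → X | ω 0 = x} := by
    ext ω
    constructor
    · intro h; exact h 0 le_rfl
    · intro h i hi
      have : i = 0 := by omega
      rw [this]; exact h
  rw [hset] at this
  simpa using this

/-- The finite-dimensional computation: the measure of a coordinate-determined event
is the sum of path weights. -/
lemma meas_fd (hms : ∀ S : Set X, MeasurableSet S)
    (hprob : ∀ x, IsProbabilityMeasure (P x))
    (hP : ∀ (x : X) (n : ℕ) (f : ℕ → X), f 0 = x →
      P x {ω | ∀ i ≤ n, ω i = f i}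
        = ∏ i ∈ Finset.range n, ENNReal.ofReal (p (f i) (f (i+1))))
    (hnn : ∀ a b, 0 ≤ p a b)
    (x : X) (m : ℕ) (A : Set (ℕ → X))
    (hA : ∀ ω ω' : ℕ → X, (∀ i ≤ m, ω i = ω' i) → ω ∈ A → ω' ∈ A) :
    P x A = ∑ g : Fin (m+1) → X,
      (if g 0 = x ∧ extend m g ∈ A then ENNReal.ofReal (wtF p m g) else 0) := by
  haveI := hprob x
  set B := {ω : ℕ → X | ω 0 = x} with hB
  have hBmeas : MeasurableSet B := by
    have : B = (fun ω : ℕ → X => ω 0) ⁻¹' {x} := rfl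
    rw [this]
    exact (measurable_pi_apply 0) (hms {x})
  have h1 : P x B = 1 := base_one P hP x
  have h0 : P x Bᶜ = 0 := by
    rw [measure_compl hBmeas (measure_ne_top _ _), h1, measure_univ]
    simp
  have key : P x A = P x (A ∩ B) := by
    have hd := measure_inter_add_diff (μ := P x) A hBmeas
    have hAB : P x (A \ B) = 0 :=
      le_antisymm (le_trans (measure_mono fun ω hω => hω.2) h0.le) zero_le
    rw [← hd, hAB, add_zero]
  set Sf : Finset (Fin (m+1) → X) :=
    Finset.univ.filter (fun g => g 0 = x ∧ extend m g ∈ A) with hSf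
  have hset : A ∩ B = ⋃ g ∈ Sf, Cyl m g := by
    ext ω
    constructor
    · rintro ⟨hA', h0'⟩
      set g : Fin (m+1) → X := fun i => ω i.val with hg
      have hagree : ∀ i ≤ m, ω i = extend m g i := by
        intro i hi
        rw [extend_le m g hi]
      refine Set.mem_iUnion₂.mpr ⟨g, ?_, hagree⟩
      exact Finset.mem_filter.mpr ⟨Finset.mem_univ _, h0', hA ω (extend m g) hagree hA'⟩
    · intro hω
      obtain ⟨g, hgS, hgω⟩ := Set.mem_iUnion₂.mp hω
      rw [hSf, Finset.mem_filter] at hgS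
      obtain ⟨-, hg0, hgA⟩ := hgS
      constructor
      · exact hA (extend m g) ω (fun i hi => (hgω i hi).symm) hgA
      · have := hgω 0 (Nat.zero_le m)
        rw [extend_le m g (Nat.zero_le m)] at this
        show ω 0 = x
        have he : (⟨0, Nat.lt_succ_of_le (Nat.zero_le m)⟩ : Fin (m+1)) = 0 := Fin.ext (by simp)
        rw [this, he, hg0]
  rw [key, hset, measure_biUnion_finset ?_ (fun g _ => cyl_meas hms m g)]
  · have : ∀ g ∈ Sf, P x (Cyl m g) = ENNReal.ofReal (wtF p m g) := by
      intro g hg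
      rw [hSf, Finset.mem_filter] at hg
      exact cyl_val P hP hnn m g hg.2.1
    rw [Finset.sum_congr rfl this, hSf, Finset.sum_filter]
  · intro g hg g' hg' hne
    exact cyl_disj m hne

end Meas
section Events
open scoped Classical
variable [MeasurableSpace X] {p : Matrix X X ℝ} (P : X → Measure (ℕ → X))

/-- at time `n` the path is in `G`, avoiding `F` strictly between. -/
def HitSet (F G : Finset X) (n : ℕ) : Set (ℕ → X) :=
  {ω | ω n ∈ G ∧ ∀ i : ℕ, 0 < i → i < n → ω i ∉ F}

def AvoidSet (F : Finset X) (m : ℕ) : Set (ℕ → X) :=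
  {ω | ∀ i : ℕ, 0 < i → i ≤ m → ω i ∉ F}

lemma meas_avoid (hms : ∀ S : Set X, MeasurableSet S)
    (hprob : ∀ x, IsProbabilityMeasure (P x))
    (hP : ∀ (x : X) (n : ℕ) (f : ℕ → X), f 0 = x →
      P x {ω | ∀ i ≤ n, ω i = f i}
        = ∏ i ∈ Finset.range n, ENNReal.ofReal (p (f i) (f (i+1))))
    (hnn : ∀ a b, 0 ≤ p a b)
    (F : Finset X) (m : ℕ) (x : X) :
    P x (AvoidSet F m) = ENNReal.ofReal (TF p F m x) := by
  have hdep : ∀ ω ω' : ℕ → X, (∀ i ≤ m, ω i = ω' i) → ω ∈ AvoidSet F m → ω' ∈ AvoidSet F m := by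
    intro ω ω' hag hω i hi1 hi2
    rw [← hag i hi2]
    exact hω i hi1 hi2
  rw [meas_fd P hms hprob hP hnn x m _ hdep]
  have hcond : ∀ g : Fin (m+1) → X,
      (g 0 = x ∧ extend m g ∈ AvoidSet F m)
        ↔ (g 0 = x ∧ ∀ i : Fin (m+1), 0 < (i:ℕ) → g i ∉ F) := by
    intro g
    constructor
    · rintro ⟨h0, hav⟩
      refine ⟨h0, fun i hi => ?_⟩
      have := hav i.val hi (by omega)
      rw [extend_le m g (by omega)] at this
      rwa [Fin.eta] at this
    · rintro ⟨h0, hav⟩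
      refine ⟨h0, fun i hi1 hi2 => ?_⟩
      rw [extend_le m g hi2]
      exact hav ⟨i, by omega⟩ hi1
  have hterm : ∀ g : Fin (m+1) → X,
      (if g 0 = x ∧ extend m g ∈ AvoidSet F m then ENNReal.ofReal (wtF p m g) else 0)
        = ENNReal.ofReal (if (g 0 = x ∧ ∀ i : Fin (m+1), 0 < (i:ℕ) → g i ∉ F)
            then wtF p m g * (fun _ : X => (1:ℝ)) (g (Fin.last m)) else 0) := by
    intro g
    by_cases hg : g 0 = x ∧ extend m g ∈ AvoidSet F m
    · rw [if_pos hg, if_pos ((hcond g).mp hg), mul_one]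
    · rw [if_neg hg, if_neg (fun hc => hg ((hcond g).mpr hc)), ENNReal.ofReal_zero]
  rw [Finset.sum_congr rfl fun g _ => hterm g]
  rw [← ENNReal.ofReal_sum_of_nonneg (fun g _ => by
    split
    · exact mul_nonneg (wtF_nonneg hnn m g) zero_le_one
    · rfl)]
  rw [Lpub F (fun _ => (1:ℝ)) m x]
  rfl

lemma meas_hit (hms : ∀ S : Set X, MeasurableSet S)
    (hprob : ∀ x, IsProbabilityMeasure (P x))
    (hP : ∀ (x : X) (n : ℕ) (f : ℕ → X), f 0 = x →
      P x {ω | ∀ i ≤ n, ω i = f i}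
        = ∏ i ∈ Finset.range n, ENNReal.ofReal (p (f i) (f (i+1))))
    (hnn : ∀ a b, 0 ≤ p a b)
    (F G : Finset X) (k : ℕ) (x : X) :
    P x (HitSet F G (k+1))
      = ENNReal.ofReal (((QF p F) ^ k *ᵥ (fun u => ∑ z ∈ G, p u z)) x) := by
  have hdep : ∀ ω ω' : ℕ → X, (∀ i ≤ k+1, ω i = ω' i)
      → ω ∈ HitSet F G (k+1) → ω' ∈ HitSet F G (k+1) := by
    intro ω ω' hag hω
    constructor
    · rw [← hag (k+1) le_rfl]; exact hω.1
    · intro i hi1 hi2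
      rw [← hag i (by omega)]
      exact hω.2 i hi1 hi2
  rw [meas_fd P hms hprob hP hnn x (k+1) _ hdep]
  have hcond : ∀ g : Fin (k+2) → X,
      (g 0 = x ∧ extend (k+1) g ∈ HitSet F G (k+1))
        ↔ (g 0 = x ∧ g (Fin.last (k+1)) ∈ G
            ∧ ∀ i : Fin (k+2), 0 < (i:ℕ) → (i:ℕ) < k+1 → g i ∉ F) := by
    intro g
    have hlast : extend (k+1) g (k+1) = g (Fin.last (k+1)) := by
      rw [extend_le (k+1) g le_rfl]
      congr 1
    constructor
    · rintro ⟨h0, hG, hav⟩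
      refine ⟨h0, hlast ▸ hG, fun i hi1 hi2 => ?_⟩
      have := hav i.val hi1 hi2
      rw [extend_le (k+1) g (by omega)] at this
      rwa [Fin.eta] at this
    · rintro ⟨h0, hG, hav⟩
      refine ⟨h0, hlast.symm ▸ hG, fun i hi1 hi2 => ?_⟩
      rw [extend_le (k+1) g (by omega)]
      exact hav ⟨i, by omega⟩ hi1 hi2
  have hterm : ∀ g : Fin (k+2) → X,
      (if g 0 = x ∧ extend (k+1) g ∈ HitSet F G (k+1) then ENNReal.ofReal (wtF p (k+1) g) else 0)
        = ENNReal.ofReal (if (g 0 = x ∧ g (Fin.last (k+1)) ∈ G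
            ∧ ∀ i : Fin (k+2), 0 < (i:ℕ) → (i:ℕ) < k+1 → g i ∉ F)
            then wtF p (k+1) g else 0) := by
    intro g
    by_cases hg : g 0 = x ∧ extend (k+1) g ∈ HitSet F G (k+1)
    · rw [if_pos hg, if_pos ((hcond g).mp hg)]
    · rw [if_neg hg, if_neg (fun hc => hg ((hcond g).mpr hc)), ENNReal.ofReal_zero]
  rw [Finset.sum_congr rfl fun g _ => hterm g]
  rw [← ENNReal.ofReal_sum_of_nonneg (fun g _ => by
    split
    · exact wtF_nonneg hnn (k+1) g
    · rfl)]
  congr 1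
  rw [sum_snoc_split k (fun g => if (g 0 = x ∧ g (Fin.last (k+1)) ∈ G
      ∧ ∀ i : Fin (k+2), 0 < (i:ℕ) → (i:ℕ) < k+1 → g i ∉ F)
      then wtF p (k+1) g else 0)]
  rw [Finset.sum_comm]
  have hterm2 : ∀ t : Fin (k+1) → X,
      (∑ z : X, if ((Fin.snoc t z : Fin (k+2) → X) 0 = x
            ∧ (Fin.snoc t z : Fin (k+2) → X) (Fin.last (k+1)) ∈ G
            ∧ ∀ i : Fin (k+2), 0 < (i:ℕ) → (i:ℕ) < k+1 → (Fin.snoc t z : Fin (k+2) → X) i ∉ F)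
          then wtF p (k+1) (Fin.snoc t z) else 0)
        = if (t 0 = x ∧ ∀ j : Fin (k+1), 0 < (j:ℕ) → t j ∉ F)
            then wtF p k t * (fun u => ∑ z ∈ G, p u z) (t (Fin.last k)) else 0 := by
    intro t
    have c0 : ∀ z : X, (Fin.snoc t z : Fin (k+2) → X) 0 = t 0 := by
      intro z
      rw [show (0 : Fin (k+2)) = Fin.castSucc 0 from (Fin.castSucc_zero).symm, Fin.snoc_castSucc]
    have clast : ∀ z : X, (Fin.snoc t z : Fin (k+2) → X) (Fin.last (k+1)) = z :=
      fun z => Fin.snoc_last _ _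
    have cavoid : ∀ z : X,
        (∀ i : Fin (k+2), 0 < (i:ℕ) → (i:ℕ) < k+1 → (Fin.snoc t z : Fin (k+2) → X) i ∉ F)
          ↔ (∀ j : Fin (k+1), 0 < (j:ℕ) → t j ∉ F) := by
      intro z
      constructor
      · intro h j hj
        have := h j.castSucc (by simpa using hj) (by rw [Fin.coe_castSucc]; exact j.isLt)
        rwa [Fin.snoc_castSucc] at this
      · intro h i hi1 hi2
        have hieq : i = Fin.castSucc ⟨i.val, by omega⟩ := Fin.ext (by simp)
        rw [hieq, Fin.snoc_castSucc]
        exact h _ hi1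
    by_cases hc : t 0 = x ∧ ∀ j : Fin (k+1), 0 < (j:ℕ) → t j ∉ F
    · rw [if_pos hc]
      have e1 : ∀ z : X, (if ((Fin.snoc t z : Fin (k+2) → X) 0 = x
            ∧ (Fin.snoc t z : Fin (k+2) → X) (Fin.last (k+1)) ∈ G
            ∧ ∀ i : Fin (k+2), 0 < (i:ℕ) → (i:ℕ) < k+1 → (Fin.snoc t z : Fin (k+2) → X) i ∉ F)
          then wtF p (k+1) (Fin.snoc t z) else 0)
          = (if z ∈ G then wtF p k t * p (t (Fin.last k)) z else 0) := by
        intro z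
        by_cases hz : z ∈ G
        · rw [if_pos hz, if_pos ⟨(c0 z).trans hc.1, (clast z).symm ▸ hz, (cavoid z).mpr hc.2⟩,
            wtF_snoc]
        · rw [if_neg hz, if_neg]
          intro hcc
          exact hz ((clast z) ▸ hcc.2.1)
      rw [Finset.sum_congr rfl fun z _ => e1 z]
      rw [Finset.sum_ite_mem Finset.univ G (fun z => wtF p k t * p (t (Fin.last k)) z),
        Finset.univ_inter, ← Finset.mul_sum]
    · rw [if_neg hc]
      refine Finset.sum_eq_zero fun z _ => ?_
      rw [if_neg]
      intro hcc
      exact hc ⟨(c0 z).symm.trans hcc.1, (cavoid z).mp hcc.2.2⟩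
  rw [Finset.sum_congr rfl fun t _ => hterm2 t]
  exact Lpub F (fun u => ∑ z ∈ G, p u z) k x

end Events
section Conv
variable {p : Matrix X X ℝ}

variable (p) in
def COL (c : X) : Matrix X X ℝ := Matrix.of fun a d => if d = c then p a c else 0

lemma colmul (c : X) (N : Matrix X X ℝ) (d e : X) : (COL p c * N) d e = p d c * N c e := by
  rw [Matrix.mul_apply]
  have h1 : ∀ f ∈ Finset.univ, COL p c d f * N f e = if f = c then p d c * N c e else 0 := by
    intro f _
    by_cases hf : f = c
    · subst hf; simp [COL]
    · simp [COL, hf]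
  rw [Finset.sum_congr rfl h1, Finset.sum_ite_eq' Finset.univ c (fun _ => p d c * N c e),
    if_pos (Finset.mem_univ c)]

lemma mid_entry (M N : Matrix X X ℝ) (c a b : X) :
    (M * COL p c * N) a b = ((M *ᵥ fun u => p u c) a) * N c b := by
  rw [mul_assoc, Matrix.mul_apply]
  have h1 : ∀ d ∈ Finset.univ, M a d * (COL p c * N) d b = (M a d * p d c) * N c b := by
    intro d _
    rw [colmul, mul_assoc]
  rw [Finset.sum_congr rfl h1, ← Finset.sum_mul]
  rfl

lemma mid_vec (M N : Matrix X X ℝ) (c : X) (v : X → ℝ) (a : X) :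
    ((M * COL p c * N) *ᵥ v) a = ((M *ᵥ fun u => p u c) a) * ((N *ᵥ v) c) := by
  show ∑ b, (M * COL p c * N) a b * v b = _
  have h1 : ∀ b ∈ Finset.univ, (M * COL p c * N) a b * v b
      = ((M *ᵥ fun u => p u c) a) * (N c b * v b) := by
    intro b _
    rw [mid_entry, mul_assoc]
  rw [Finset.sum_congr rfl h1, ← Finset.mul_sum]
  rfl

lemma sum_mulVec_apply {ι : Type*} (s : Finset ι) (A : ι → Matrix X X ℝ) (v : X → ℝ) (x : X) :
    ((∑ j ∈ s, A j) *ᵥ v) x = ∑ j ∈ s, (A j *ᵥ v) x := by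
  show ∑ d, (∑ j ∈ s, A j) x d * v d = _
  have h1 : ∀ d ∈ Finset.univ, (∑ j ∈ s, A j) x d * v d = ∑ j ∈ s, A j x d * v d := by
    intro d _
    rw [Matrix.sum_apply, Finset.sum_mul]
  rw [Finset.sum_congr rfl h1, Finset.sum_comm]
  rfl

lemma p_decomp (F : Finset X) : p = QF p F + ∑ c ∈ F, COL p c := by
  ext a d
  have h1 : (∑ c ∈ F, COL p c) a d = ∑ c ∈ F, (if d = c then p a c else 0) := by
    rw [Matrix.sum_apply]
    rfl
  have h2 : ∑ c ∈ F, (if d = c then p a c else 0) = if d ∈ F then p a d else 0 :=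
    Finset.sum_ite_eq F d (fun c => p a c)
  show p a d = QF p F a d + _
  rw [h1, h2]
  by_cases hd : d ∈ F
  · simp [QF, hd]
  · simp [QF, hd]

lemma QF_split (F : Finset X) {y : X} (hy : y ∉ F) :
    QF p F = QF p (insert y F) + COL p y := by
  ext a d
  show QF p F a d = QF p (insert y F) a d + COL p y a d
  by_cases hd : d = y
  · subst hd
    simp [QF, COL, hy]
  · by_cases hdF : d ∈ F
    · simp [QF, COL, hdF, hd]
    · simp [QF, COL, hdF, hd]

lemma pow_mulVec_one (hrow : ∀ a, ∑ b, p a b = 1) (m : ℕ) (x : X) :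
    ((p ^ m) *ᵥ fun _ => (1:ℝ)) x = 1 := by
  induction m generalizing x with
  | zero => simp
  | succ m ih =>
      rw [pow_succ', ← Matrix.mulVec_mulVec]
      have : (p ^ m *ᵥ fun _ => (1:ℝ)) = fun _ => (1:ℝ) := funext fun z => ih z
      rw [this]
      show ∑ d, p x d * 1 = 1
      simp [hrow x]

/-- Partition of total mass by the first entry time into `F`. -/
lemma partition_id (hrow : ∀ a, ∑ b, p a b = 1) (F : Finset X) (x : X) (m : ℕ) :
    (1:ℝ) = TF p F m x
      + ∑ j ∈ Finset.range m, ∑ c ∈ F, ((QF p F)^j *ᵥ fun u => p u c) x := by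
  have hexp := expansion (QF p F) (∑ c ∈ F, COL p c) m
  rw [← p_decomp F] at hexp
  have := congrArg (fun M : Matrix X X ℝ => (M *ᵥ fun _ => (1:ℝ)) x) hexp
  rw [pow_mulVec_one hrow m x] at this
  rw [Matrix.add_mulVec] at this
  have h2 : ((∑ j ∈ Finset.range m,
        (QF p F)^j * (∑ c ∈ F, COL p c) * p ^ (m-1-j)) *ᵥ fun _ => (1:ℝ)) x
      = ∑ j ∈ Finset.range m, ∑ c ∈ F, ((QF p F)^j *ᵥ fun u => p u c) x := by
    rw [sum_mulVec_apply]
    refine Finset.sum_congr rfl fun j _ => ?_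
    have h3 : (QF p F)^j * (∑ c ∈ F, COL p c) * p ^ (m-1-j)
        = ∑ c ∈ F, (QF p F)^j * COL p c * p ^ (m-1-j) := by
      rw [Finset.mul_sum, Finset.sum_mul]
    rw [h3, sum_mulVec_apply]
    refine Finset.sum_congr rfl fun c _ => ?_
    rw [mid_vec, pow_mulVec_one hrow, mul_one]
  rw [Pi.add_apply, h2] at this
  exact this

/-- First-return-to-`y` decomposition of taboo path sums. -/
lemma conv_vec (F : Finset X) {y : X} (hy : y ∉ F) (v : X → ℝ) (x : X) (n : ℕ) :
    ((QF p F)^n *ᵥ v) x = ((QF p (insert y F))^n *ᵥ v) x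
      + ∑ j ∈ Finset.range n,
          (((QF p (insert y F))^j *ᵥ fun u => p u y) x) * (((QF p F)^(n-1-j)) *ᵥ v) y := by
  have hexp := expansion (QF p (insert y F)) (COL p y) n
  rw [← QF_split F hy] at hexp
  have := congrArg (fun M : Matrix X X ℝ => (M *ᵥ v) x) hexp
  rw [Matrix.add_mulVec, Pi.add_apply, sum_mulVec_apply] at this
  rw [this]
  congr 1
  refine Finset.sum_congr rfl fun j _ => ?_
  rw [mid_vec]

end Conv
section Pos
variable {p : Matrix X X ℝ}

lemma QF_pow_col_zero {F : Finset X} {b : X} (hb : b ∈ F) (n : ℕ) (a : X) :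
    ((QF p F) ^ (n+1)) a b = 0 := by
  rw [pow_succ, Matrix.mul_apply]
  refine Finset.sum_eq_zero fun c _ => ?_
  have : QF p F c b = 0 := by simp [QF, hb]
  rw [this, mul_zero]

lemma exists_D_pos
    (hnn : ∀ a b, 0 ≤ p a b) (hrow : ∀ a, ∑ b, p a b = 1)
    (hirr : ∀ a b : X, ∃ n : ℕ, 0 < (p ^ n) a b)
    (y y₁ y₂ : X) (h1 : y ≠ y₁) (h2 : y ≠ y₂) (h12 : y₁ ≠ y₂) :
    ∃ m, 0 < ((QF p {y, y₁, y₂})^m *ᵥ fun u => p u y₁ + p u y₂) y := by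
  obtain ⟨n, hn1, hn2⟩ := reach_pos hnn hrow hirr y y₁
  clear hn1
  have hmain : ∀ n : ℕ, 0 < (p ^ n) y y₁ →
      ∃ m, 0 < ((QF p {y, y₁, y₂})^m *ᵥ fun u => p u y₁ + p u y₂) y := by
    intro n
    induction n using Nat.strong_induction_on with
    | _ n IH =>
      intro hpos
      rcases Nat.eq_zero_or_pos n with rfl | hn0
      · exfalso
        rw [pow_zero, Matrix.one_apply_ne h1] at hpos
        exact lt_irrefl 0 hpos
      set F0 : Finset X := {y, y₁, y₂} with hF0
      set M : Matrix X X ℝ := QF p F0 with hM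
      have hy1F : y₁ ∈ F0 := by simp [hF0]
      have hexp := expansion M (∑ c ∈ F0, COL p c) n
      rw [← p_decomp F0] at hexp
      have hentry := congrArg (fun A : Matrix X X ℝ => A y y₁) hexp
      have hMn : (M ^ n) y y₁ = 0 := by
        obtain ⟨k, rfl⟩ : ∃ k, n = k + 1 := ⟨n - 1, by omega⟩
        exact QF_pow_col_zero hy1F k y
      rw [Matrix.add_apply, hMn, zero_add] at hentry
      have hsum : (∑ j ∈ Finset.range n, M ^ j * (∑ c ∈ F0, COL p c) * p ^ (n-1-j)) y y₁
          = ∑ j ∈ Finset.range n, ∑ c ∈ F0,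
              ((M^j *ᵥ fun u => p u c) y) * (p ^ (n-1-j)) c y₁ := by
        rw [Matrix.sum_apply]
        refine Finset.sum_congr rfl fun j _ => ?_
        have h3 : M^j * (∑ c ∈ F0, COL p c) * p ^ (n-1-j)
            = ∑ c ∈ F0, M^j * COL p c * p ^ (n-1-j) := by
          rw [Finset.mul_sum, Finset.sum_mul]
        rw [h3, Matrix.sum_apply]
        exact Finset.sum_congr rfl fun c _ => mid_entry _ _ c y y₁
      rw [hsum] at hentry
      have hnonneg : ∀ j ∈ Finset.range n, ∀ c ∈ F0,
          0 ≤ ((M^j *ᵥ fun u => p u c) y) * (p ^ (n-1-j)) c y₁ := by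
        intro j _ c _
        exact mul_nonneg
          (mulVec_nonneg (pow_entry_nonneg (QF_nonneg hnn F0) j) (fun d => hnn d c) y)
          (pow_entry_nonneg hnn _ c y₁)
      have hex : ∃ j ∈ Finset.range n, ∃ c ∈ F0,
          0 < ((M^j *ᵥ fun u => p u c) y) * (p ^ (n-1-j)) c y₁ := by
        by_contra hcon
        push_neg at hcon
        have : (0:ℝ) < 0 := by
          calc (0:ℝ) < (p ^ n) y y₁ := hpos
            _ = _ := hentry
            _ ≤ 0 := Finset.sum_nonpos fun j hj => Finset.sum_nonpos fun c hc =>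
                le_antisymm (hcon j hj c hc) (hnonneg j hj c hc) ▸ le_rfl
        exact lt_irrefl _ this
      obtain ⟨j, hj, c, hcF, hprod⟩ := hex
      have hfac1 : 0 < (M^j *ᵥ fun u => p u c) y := by
        by_contra hle
        push_neg at hle
        have h0 : (M^j *ᵥ fun u => p u c) y = 0 :=
          le_antisymm hle (mulVec_nonneg (pow_entry_nonneg (QF_nonneg hnn F0) j)
            (fun d => hnn d c) y)
        rw [h0, zero_mul] at hprod
        exact lt_irrefl _ hprod
      have hsplit : ((QF p {y, y₁, y₂})^j *ᵥ fun u => p u y₁ + p u y₂) y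
          = ((M^j *ᵥ fun u => p u y₁) y) + ((M^j *ᵥ fun u => p u y₂) y) := by
        have : (fun u => p u y₁ + p u y₂) = (fun u => p u y₁) + (fun u => p u y₂) := rfl
        rw [this, Matrix.mulVec_add]
        rfl
      have hnn1 : 0 ≤ (M^j *ᵥ fun u => p u y₁) y :=
        mulVec_nonneg (pow_entry_nonneg (QF_nonneg hnn F0) j) (fun d => hnn d y₁) y
      have hnn2 : 0 ≤ (M^j *ᵥ fun u => p u y₂) y :=
        mulVec_nonneg (pow_entry_nonneg (QF_nonneg hnn F0) j) (fun d => hnn d y₂) y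
      rcases Finset.mem_insert.mp hcF with rfl | hc2
      · -- c = y : recurse
        have hfac2 : 0 < (p ^ (n-1-j)) c y₁ := by
          by_contra hle
          push_neg at hle
          have h0 : (p ^ (n-1-j)) c y₁ = 0 :=
            le_antisymm hle (pow_entry_nonneg hnn _ c y₁)
          rw [h0, mul_zero] at hprod
          exact lt_irrefl _ hprod
        have hlt : n - 1 - j < n := by
          have := Finset.mem_range.mp hj
          omega
        exact IH (n-1-j) hlt hfac2
      · rcases Finset.mem_insert.mp hc2 with rfl | hc3
        · -- c = y₁
          exact ⟨j, by rw [hsplit]; positivity⟩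
        · -- c = y₂
          have : c = y₂ := Finset.mem_singleton.mp hc3
          subst this
          exact ⟨j, by rw [hsplit]; positivity⟩
  exact hmain n hn2

end Pos

section RetTime

lemma retTime_le {A : Set X} {ω : ℕ → X} {t : ℕ} (ht : 0 < t) (hA : ω t ∈ A) :
    retTime A ω ≤ t := Nat.sInf_le ⟨ht, hA⟩

lemma retTime_spec {A : Set X} {ω : ℕ → X} (h : ∃ t, 0 < t ∧ ω t ∈ A) :
    0 < retTime A ω ∧ ω (retTime A ω) ∈ A :=
  Nat.sInf_mem (⟨h.choose, h.choose_spec⟩ : {t : ℕ | 0 < t ∧ ω t ∈ A}.Nonempty)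

lemma retTime_min {A : Set X} {ω : ℕ → X} {i : ℕ} (h1 : 0 < i) (h2 : i < retTime A ω) :
    ω i ∉ A := fun hA => absurd (retTime_le h1 hA) (by omega)

lemma retTime_eq_zero {A : Set X} {ω : ℕ → X} (h : ∀ t, 0 < t → ω t ∉ A) :
    retTime A ω = 0 := by
  unfold retTime
  rw [Nat.sInf_eq_zero]
  right
  ext t
  simp only [Set.mem_setOf_eq, Set.mem_empty_iff_false, iff_false, not_and]
  exact h t

end RetTime

section Null
variable [MeasurableSpace X] {p : Matrix X X ℝ} (P : X → Measure (ℕ → X))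

lemma nohit_null (hms : ∀ S : Set X, MeasurableSet S)
    (hprob : ∀ x, IsProbabilityMeasure (P x))
    (hP : ∀ (x : X) (n : ℕ) (f : ℕ → X), f 0 = x →
      P x {ω | ∀ i ≤ n, ω i = f i}
        = ∏ i ∈ Finset.range n, ENNReal.ofReal (p (f i) (f (i+1))))
    (hnn : ∀ a b, 0 ≤ p a b) (hrow : ∀ a, ∑ b, p a b = 1)
    (hirr : ∀ a b : X, ∃ n : ℕ, 0 < (p ^ n) a b)
    (F : Finset X) {h : X} (hh : h ∈ F) (x : X) :
    P x {ω : ℕ → X | ∀ t : ℕ, 0 < t → ω t ∉ F} = 0 := by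
  haveI := hprob x
  set N := {ω : ℕ → X | ∀ t : ℕ, 0 < t → ω t ∉ F} with hN
  have hb : ∀ m, P x N ≤ ENNReal.ofReal (TF p F m x) := by
    intro m
    rw [← meas_avoid P hms hprob hP hnn F m x]
    refine measure_mono fun ω hω => ?_
    intro i hi1 _
    exact hω i hi1
  by_contra hne
  have hfin : P x N ≠ ⊤ := measure_ne_top _ _
  have hpos : 0 < (P x N).toReal := ENNReal.toReal_pos hne hfin
  obtain ⟨m, hm⟩ := TF_small hnn hrow hirr hh x ((P x N).toReal) hpos
  have hlt : ENNReal.ofReal (TF p F m x) < P x N := by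
    calc ENNReal.ofReal (TF p F m x) < ENNReal.ofReal ((P x N).toReal) :=
          (ENNReal.ofReal_lt_ofReal_iff hpos).mpr hm
      _ = P x N := ENNReal.ofReal_toReal hfin
  exact absurd (hb m) (not_le.mpr hlt)

lemma hitset_meas (hms : ∀ S : Set X, MeasurableSet S) (F G : Finset X) (n : ℕ) :
    MeasurableSet (HitSet F G n) := by
  have : HitSet F G n = ((fun ω : ℕ → X => ω n) ⁻¹' {z | z ∈ G})
      ∩ ⋂ (i : ℕ), ⋂ (_ : 0 < i ∧ i < n), ((fun ω : ℕ → X => ω i) ⁻¹' {z | z ∉ F}) := by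
    ext ω
    simp only [HitSet, Set.mem_inter_iff, Set.mem_preimage, Set.mem_iInter, Set.mem_setOf_eq]
    constructor
    · rintro ⟨hG, hF⟩
      exact ⟨hG, fun i hi => hF i hi.1 hi.2⟩
    · rintro ⟨hG, hF⟩
      exact ⟨hG, fun i hi1 hi2 => hF i ⟨hi1, hi2⟩⟩
  rw [this]
  exact ((measurable_pi_apply n) (hms _)).inter
    (MeasurableSet.iInter fun i => MeasurableSet.iInter fun _ =>
      (measurable_pi_apply i) (hms _))

lemma hitset_disj (F G : Finset X) (hGF : ∀ z ∈ G, z ∈ F) :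
    Pairwise (Function.onFun Disjoint (fun k : ℕ => HitSet F G (k+1))) := by
  have key : ∀ k l : ℕ, k < l → Disjoint (HitSet F G (k+1)) (HitSet F G (l+1)) := by
    intro k l hkl
    rw [Set.disjoint_left]
    rintro ω ⟨hG, _⟩ ⟨_, hF⟩
    exact hF (k+1) (by omega) (by omega) (hGF _ hG)
  intro k l hkl
  rcases lt_or_gt_of_ne hkl with h | h
  · exact key k l h
  · exact (key l k h).symm

lemma meas_hit_union (hms : ∀ S : Set X, MeasurableSet S)
    (hprob : ∀ x, IsProbabilityMeasure (P x))
    (hP : ∀ (x : X) (n : ℕ) (f : ℕ → X), f 0 = x →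
      P x {ω | ∀ i ≤ n, ω i = f i}
        = ∏ i ∈ Finset.range n, ENNReal.ofReal (p (f i) (f (i+1))))
    (hnn : ∀ a b, 0 ≤ p a b)
    (F G : Finset X) (hGF : ∀ z ∈ G, z ∈ F) (x : X) :
    P x (⋃ k : ℕ, HitSet F G (k+1))
      = ∑' k : ℕ, ENNReal.ofReal (((QF p F)^k *ᵥ fun u => ∑ z ∈ G, p u z) x) := by
  rw [measure_iUnion (hitset_disj F G hGF) (fun k => hitset_meas hms F G (k+1))]
  exact tsum_congr fun k => meas_hit P hms hprob hP hnn F G k x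

lemma meas_eq_of_symmdiff {μ : Measure (ℕ → X)} {A B N : Set (ℕ → X)}
    (hAB : A ⊆ B ∪ N) (hBA : B ⊆ A ∪ N) (hN : μ N = 0) : μ A = μ B := by
  have h1 : μ A ≤ μ B := by
    calc μ A ≤ μ (B ∪ N) := measure_mono hAB
      _ ≤ μ B + μ N := measure_union_le _ _
      _ = μ B := by rw [hN, add_zero]
  have h2 : μ B ≤ μ A := by
    calc μ B ≤ μ (A ∪ N) := measure_mono hBA
      _ ≤ μ A + μ N := measure_union_le _ _
      _ = μ A := by rw [hN, add_zero]
  exact le_antisymm h1 h2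

end Null
end Stmt3

open Stmt3 in
/-- For an irreducible Markov chain on a finite state space and pairwise
distinct states `y, y₁, y₂`:
`P_y(τ_{y₁} < τ_{y₂}) = P_y(τ_{y₁} < τ_{{y₂,y}}) / P_y(τ_{{y₁,y₂}} < τ_y)`,
hitting times of the starting point being first return times. -/
theorem stmt3 {X : Type*} [Fintype X] [DecidableEq X] [MeasurableSpace X]
    (p : Matrix X X ℝ)
    (hnn : ∀ a b, 0 ≤ p a b) (hrow : ∀ a, ∑ b, p a b = 1)
    (hirr : ∀ a b : X, ∃ n : ℕ, 0 < (p ^ n) a b)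
    (P : X → Measure (ℕ → X)) (hprob : ∀ x, IsProbabilityMeasure (P x))
    (hP : ∀ (x : X) (n : ℕ) (f : ℕ → X), f 0 = x →
      P x {ω | ∀ i ≤ n, ω i = f i}
        = ∏ i ∈ Finset.range n, ENNReal.ofReal (p (f i) (f (i+1))))
    (y y₁ y₂ : X) (h1 : y ≠ y₁) (h2 : y ≠ y₂) (h12 : y₁ ≠ y₂) :
    (P y {ω | retTime {y₁} ω < retTime {y₂} ω}).toReal
      = (P y {ω | retTime {y₁} ω < retTime {y₂, y} ω}).toReal
        / (P y {ω | retTime {y₁, y₂} ω < retTime {y} ω}).toReal := by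
  classical
  have hms : ∀ S : Set X, MeasurableSet S := allMeasurable P hnn hrow hirr hprob hP
  set F2 : Finset X := {y₁, y₂} with hF2def
  set F0 : Finset X := {y, y₁, y₂} with hF0def
  -- the real sequences
  set α : ℕ → ℝ := fun k => ((QF p F2)^k *ᵥ fun u => ∑ z ∈ ({y₁} : Finset X), p u z) y with hαdef
  set β : ℕ → ℝ := fun k => ((QF p F0)^k *ᵥ fun u => ∑ z ∈ ({y₁} : Finset X), p u z) y with hβdef
  set δ : ℕ → ℝ := fun k => ((QF p F0)^k *ᵥ fun u => ∑ z ∈ ({y₁, y₂} : Finset X), p u z) y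
    with hδdef
  set ρ : ℕ → ℝ := fun k => ((QF p F0)^k *ᵥ fun u => p u y) y with hρdef
  -- nonnegativity
  have hαnn : ∀ k, 0 ≤ α k := fun k =>
    mulVec_nonneg (pow_entry_nonneg (QF_nonneg hnn F2) k)
      (fun d => Finset.sum_nonneg fun z _ => hnn d z) y
  have hβnn : ∀ k, 0 ≤ β k := fun k =>
    mulVec_nonneg (pow_entry_nonneg (QF_nonneg hnn F0) k)
      (fun d => Finset.sum_nonneg fun z _ => hnn d z) y
  have hδnn : ∀ k, 0 ≤ δ k := fun k =>
    mulVec_nonneg (pow_entry_nonneg (QF_nonneg hnn F0) k)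
      (fun d => Finset.sum_nonneg fun z _ => hnn d z) y
  have hρnn : ∀ k, 0 ≤ ρ k := fun k =>
    mulVec_nonneg (pow_entry_nonneg (QF_nonneg hnn F0) k) (fun d => hnn d y) y
  -- splitting lemmas for the weight vectors
  have hvec1 : (fun u => ∑ z ∈ ({y₁} : Finset X), p u z) = fun u => p u y₁ :=
    funext fun u => Finset.sum_singleton _ _
  have hvec2 : (fun u => ∑ z ∈ ({y₁, y₂} : Finset X), p u z)
      = fun u => p u y₁ + p u y₂ := by
    funext u
    rw [Finset.sum_insert (by simp [h12]), Finset.sum_singleton]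
  have hδsplit : ∀ j, δ j = ((QF p F0)^j *ᵥ fun u => p u y₁) y
      + ((QF p F0)^j *ᵥ fun u => p u y₂) y := by
    intro j
    rw [hδdef]
    simp only
    rw [hvec2]
    have e : (fun u => p u y₁ + p u y₂) = (fun u => p u y₁) + (fun u => p u y₂) := rfl
    rw [e, Matrix.mulVec_add]
    rfl
  have hβ1 : ∀ j, β j = ((QF p F0)^j *ᵥ fun u => p u y₁) y := by
    intro j
    rw [hβdef]
    simp only
    rw [hvec1]
  -- the partition identities
  have hyF2 : y ∉ F2 := by simp [hF2def, h1, h2]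
  have hinsert : insert y F2 = F0 := rfl
  have hsumF0 : ∀ j, ∑ c ∈ F0, ((QF p F0)^j *ᵥ fun u => p u c) y = ρ j + δ j := by
    intro j
    rw [hF0def]
    rw [Finset.sum_insert (by simp [h1, h2]), Finset.sum_insert (by simp [h12]),
      Finset.sum_singleton]
    rw [hδsplit j]
  have hpart0 : ∀ m, ∑ j ∈ Finset.range m, (ρ j + δ j) = 1 - TF p F0 m y := by
    intro m
    have h' := partition_id hrow F0 y m
    rw [Finset.sum_congr rfl (fun j _ => hsumF0 j)] at h'
    linarith
  -- summability
  have hρδsum : Summable (fun j => ρ j + δ j) := by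
    refine summable_of_sum_range_le (c := 1) (fun n => add_nonneg (hρnn n) (hδnn n)) (fun m => ?_)
    rw [hpart0 m]
    have := TF_nonneg hnn F0 m y
    linarith
  have hρsum : Summable ρ :=
    Summable.of_nonneg_of_le hρnn (fun j => le_add_of_nonneg_right (hδnn j)) hρδsum
  have hδsum : Summable δ :=
    Summable.of_nonneg_of_le hδnn (fun j => le_add_of_nonneg_left (hρnn j)) hρδsum
  have hβsum : Summable β := by
    refine Summable.of_nonneg_of_le hβnn (fun j => ?_) hδsum
    rw [hβ1 j, hδsplit j]
    have : 0 ≤ ((QF p F0)^j *ᵥ fun u => p u y₂) y :=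
      mulVec_nonneg (pow_entry_nonneg (QF_nonneg hnn F0) j) (fun d => hnn d y₂) y
    linarith
  have hαsum : Summable α := by
    have hpart2 : ∀ m, ∑ j ∈ Finset.range m,
        (∑ c ∈ F2, ((QF p F2)^j *ᵥ fun u => p u c) y) = 1 - TF p F2 m y := by
      intro m
      have := partition_id hrow F2 y m
      linarith
    have hterm : ∀ j, α j ≤ ∑ c ∈ F2, ((QF p F2)^j *ᵥ fun u => p u c) y := by
      intro j
      rw [hF2def, Finset.sum_insert (by simp [h12]), Finset.sum_singleton]
      have hx2 : 0 ≤ ((QF p F2)^j *ᵥ fun u => p u y₂) y :=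
        mulVec_nonneg (pow_entry_nonneg (QF_nonneg hnn F2) j) (fun d => hnn d y₂) y
      have hα1 : α j = ((QF p F2)^j *ᵥ fun u => p u y₁) y := by
        rw [hαdef]; simp only; rw [hvec1]
      rw [hα1]
      linarith
    refine summable_of_sum_range_le (c := 1) (fun n => hαnn n) (fun m => ?_)
    calc ∑ j ∈ Finset.range m, α j
        ≤ ∑ j ∈ Finset.range m, ∑ c ∈ F2, ((QF p F2)^j *ᵥ fun u => p u c) y :=
          Finset.sum_le_sum fun j _ => hterm j
      _ = 1 - TF p F2 m y := hpart2 m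
      _ ≤ 1 := by have := TF_nonneg hnn F2 m y; linarith
  -- the limits
  set a : ℝ := ∑' k, α k with hadef
  set b : ℝ := ∑' k, β k with hbdef
  set r : ℝ := ∑' k, ρ k with hrdef
  set d : ℝ := ∑' k, δ k with hddef
  have hann : 0 ≤ a := tsum_nonneg hαnn
  have hbnn : 0 ≤ b := tsum_nonneg hβnn
  have hdnn : 0 ≤ d := tsum_nonneg hδnn
  -- r + d = 1
  have hTF0tendsto : Tendsto (fun m => TF p F0 m y) atTop (nhds 0) := by
    rw [Metric.tendsto_atTop]
    intro ε hε
    obtain ⟨m₀, hm₀⟩ := TF_small hnn hrow hirr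
      (show y ∈ F0 by simp [hF0def]) y ε hε
    refine ⟨m₀, fun m hm => ?_⟩
    rw [Real.dist_eq, sub_zero, abs_of_nonneg (TF_nonneg hnn F0 m y)]
    exact lt_of_le_of_lt (TF_antitone hnn hrow F0 hm y) hm₀
  have hrd : r + d = 1 := by
    have hhs : HasSum (fun j => ρ j + δ j) (r + d) := (hρsum.hasSum).add (hδsum.hasSum)
    have hten : Tendsto (fun m => ∑ j ∈ Finset.range m, (ρ j + δ j)) atTop (nhds 1) := by
      have : (fun m => ∑ j ∈ Finset.range m, (ρ j + δ j))
          = fun m => 1 - TF p F0 m y := funext fun m => hpart0 m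
      rw [this]
      have := hTF0tendsto.const_sub (1:ℝ)
      simpa using this
    exact tendsto_nhds_unique hhs.tendsto_sum_nat hten
  -- d > 0
  have hdpos : 0 < d := by
    obtain ⟨m, hm⟩ := exists_D_pos hnn hrow hirr y y₁ y₂ h1 h2 h12
    have hδm : 0 < δ m := by
      rw [hδdef]
      simp only
      rw [hvec2]
      exact hm
    have := Summable.le_tsum hδsum m (fun j _ => hδnn j)
    linarith
  -- the renewal equation a = b + r * a
  have hconv : ∀ n, α n = β n + ∑ j ∈ Finset.range n, ρ j * α (n-1-j) := by
    intro n
    have := conv_vec (p := p) F2 hyF2 (fun u => ∑ z ∈ ({y₁} : Finset X), p u z) y n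
    rw [hinsert] at this
    exact this
  have hconvseq : Summable (fun n => ∑ j ∈ Finset.range n, ρ j * α (n-1-j)) := by
    have : (fun n => ∑ j ∈ Finset.range n, ρ j * α (n-1-j)) = fun n => α n - β n := by
      funext n
      have := hconv n
      linarith
    rw [this]
    exact hαsum.sub hβsum
  have hprodsum : Summable (fun x : ℕ × ℕ => ρ x.1 * α x.2) := by
    have hρnorm : Summable (fun n => ‖ρ n‖) := by
      simpa [Real.norm_eq_abs] using hρsum.abs
    have hαnorm : Summable (fun n => ‖α n‖) := by
      simpa [Real.norm_eq_abs] using hαsum.abs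
    exact summable_mul_of_summable_norm hρnorm hαnorm
  have hconvsum : ∑' n, (∑ j ∈ Finset.range n, ρ j * α (n-1-j)) = r * a := by
    rw [Summable.tsum_eq_zero_add hconvseq]
    have h0 : ∑ j ∈ Finset.range 0, ρ j * α (0-1-j) = 0 := by simp
    rw [h0, zero_add]
    have hshift : ∀ m : ℕ, ∑ j ∈ Finset.range (m+1), ρ j * α (m+1-1-j)
        = ∑ kl ∈ Finset.HasAntidiagonal.antidiagonal m, ρ kl.1 * α kl.2 := by
      intro m
      rw [Finset.Nat.sum_antidiagonal_eq_sum_range_succ_mk]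
      refine Finset.sum_congr rfl fun j hj => ?_
      simp only
      have : m + 1 - 1 - j = m - j := by omega
      rw [this]
    rw [tsum_congr hshift]
    exact (Summable.tsum_mul_tsum_eq_tsum_sum_antidiagonal hρsum hαsum hprodsum).symm
  have hren : a = b + r * a := by
    conv_lhs => rw [hadef]
    rw [tsum_congr hconv, Summable.tsum_add hβsum hconvseq, hconvsum, ← hbdef]
  -- measure computations
  have hNH1 : P y {ω : ℕ → X | ∀ t, 0 < t → ω t ∉ ({y₁} : Finset X)} = 0 :=
    nohit_null P hms hprob hP hnn hrow hirr {y₁} (Finset.mem_singleton_self y₁) y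
  have hNH2 : P y {ω : ℕ → X | ∀ t, 0 < t → ω t ∉ ({y₂} : Finset X)} = 0 :=
    nohit_null P hms hprob hP hnn hrow hirr {y₂} (Finset.mem_singleton_self y₂) y
  have hNHy : P y {ω : ℕ → X | ∀ t, 0 < t → ω t ∉ ({y} : Finset X)} = 0 :=
    nohit_null P hms hprob hP hnn hrow hirr {y} (Finset.mem_singleton_self y) y
  have hNH2y : P y {ω : ℕ → X | ∀ t, 0 < t → ω t ∉ ({y₂, y} : Finset X)} = 0 :=
    nohit_null P hms hprob hP hnn hrow hirr {y₂, y} (Finset.mem_insert_self y₂ {y}) y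
  -- event E
  have hPE : P y {ω | retTime {y₁} ω < retTime {y₂} ω}
      = P y (⋃ k : ℕ, HitSet F2 {y₁} (k+1)) := by
    refine meas_eq_of_symmdiff (N := {ω : ℕ → X | ∀ t, 0 < t → ω t ∉ ({y₁} : Finset X)}
      ∪ {ω : ℕ → X | ∀ t, 0 < t → ω t ∉ ({y₂} : Finset X)}) ?_ ?_ ?_
    · intro ω hω
      by_cases hh : ∃ t, 0 < t ∧ ω t ∈ ({y₁} : Set X)
      · left
        obtain ⟨hpos, hmem⟩ := retTime_spec hh
        refine Set.mem_iUnion.mpr ⟨retTime ({y₁} : Set X) ω - 1, ?_⟩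
        have hn : retTime ({y₁} : Set X) ω - 1 + 1 = retTime ({y₁} : Set X) ω := by omega
        constructor
        · rw [hn]
          simpa using hmem
        · intro i hi1 hi2
          rw [hn] at hi2
          intro hiF
          rcases Finset.mem_insert.mp hiF with hiy1 | hiy2
          · exact retTime_min hi1 hi2 (by simpa using hiy1)
          · have : ω i ∈ ({y₂} : Set X) := by
              simpa using Finset.mem_singleton.mp hiy2
            have := retTime_le hi1 this
            have hlt : retTime ({y₁} : Set X) ω < retTime ({y₂} : Set X) ω := hω
            omega
      · right; left
        intro t ht
        push_neg at hh
        simpa using hh t ht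
    · intro ω hω
      obtain ⟨k, hG, hav⟩ := Set.mem_iUnion.mp hω
      have hky1 : ω (k+1) = y₁ := by simpa [hF2def] using hG
      by_cases hh2 : ∃ t, 0 < t ∧ ω t ∈ ({y₂} : Set X)
      · left
        obtain ⟨ht2pos, ht2mem⟩ := retTime_spec hh2
        have hle : retTime ({y₁} : Set X) ω ≤ k+1 :=
          retTime_le (by omega) (by simp [hky1])
        have hgt : k+1 < retTime ({y₂} : Set X) ω := by
          by_contra hcon
          push_neg at hcon
          rcases Nat.lt_or_ge (retTime ({y₂} : Set X) ω) (k+1) with hlt | hge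
          · exact hav _ ht2pos hlt (by simp [hF2def, Set.mem_singleton_iff.mp ht2mem])
          · have heq : retTime ({y₂} : Set X) ω = k+1 := by omega
            rw [heq] at ht2mem
            exact h12 (by rw [← hky1, Set.mem_singleton_iff.mp ht2mem])
        show retTime ({y₁} : Set X) ω < retTime ({y₂} : Set X) ω
        omega
      · right; right
        intro t ht
        push_neg at hh2
        simpa using hh2 t ht
    · exact measure_union_null hNH1 hNH2
  -- event EB
  have hPB : P y {ω | retTime {y₁} ω < retTime {y₂, y} ω}
      = P y (⋃ k : ℕ, HitSet F0 {y₁} (k+1)) := by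
    refine meas_eq_of_symmdiff (N := {ω : ℕ → X | ∀ t, 0 < t → ω t ∉ ({y₁} : Finset X)}
      ∪ {ω : ℕ → X | ∀ t, 0 < t → ω t ∉ ({y₂, y} : Finset X)}) ?_ ?_ ?_
    · intro ω hω
      by_cases hh : ∃ t, 0 < t ∧ ω t ∈ ({y₁} : Set X)
      · left
        obtain ⟨hpos, hmem⟩ := retTime_spec hh
        refine Set.mem_iUnion.mpr ⟨retTime ({y₁} : Set X) ω - 1, ?_⟩
        have hn : retTime ({y₁} : Set X) ω - 1 + 1 = retTime ({y₁} : Set X) ω := by omega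
        constructor
        · rw [hn]
          simpa using hmem
        · intro i hi1 hi2
          rw [hn] at hi2
          intro hiF
          have h2y : ω i ∈ ({y₂, y} : Set X) → False := by
            intro hmem2
            have := retTime_le (A := ({y₂, y} : Set X)) hi1 hmem2
            have hlt : retTime ({y₁} : Set X) ω < retTime ({y₂, y} : Set X) ω := hω
            omega
          rcases Finset.mem_insert.mp hiF with hiy | hrest
          · exact h2y (by simp [hiy])
          · rcases Finset.mem_insert.mp hrest with hiy1 | hiy2
            · exact retTime_min hi1 hi2 (by simpa using hiy1)
            · exact h2y (by simp [Finset.mem_singleton.mp hiy2])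
      · right; left
        intro t ht
        push_neg at hh
        simpa using hh t ht
    · intro ω hω
      obtain ⟨k, hG, hav⟩ := Set.mem_iUnion.mp hω
      have hky1 : ω (k+1) = y₁ := by simpa using hG
      by_cases hh2 : ∃ t, 0 < t ∧ ω t ∈ ({y₂, y} : Set X)
      · left
        obtain ⟨ht2pos, ht2mem⟩ := retTime_spec hh2
        have hle : retTime ({y₁} : Set X) ω ≤ k+1 :=
          retTime_le (by omega) (by simp [hky1])
        have hgt : k+1 < retTime ({y₂, y} : Set X) ω := by
          by_contra hcon
          push_neg at hcon
          rcases Nat.lt_or_ge (retTime ({y₂, y} : Set X) ω) (k+1) with hlt | hge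
          · refine hav _ ht2pos hlt ?_
            rcases Set.mem_insert_iff.mp ht2mem with hm1 | hm2
            · simp [hF0def, hm1]
            · simp [hF0def, Set.mem_singleton_iff.mp hm2]
          · have heq : retTime ({y₂, y} : Set X) ω = k+1 := by omega
            rw [heq] at ht2mem
            rcases Set.mem_insert_iff.mp ht2mem with hm1 | hm2
            · exact h12 (by rw [← hky1, hm1])
            · exact h1 (by rw [← hky1, Set.mem_singleton_iff.mp hm2])
        show retTime ({y₁} : Set X) ω < retTime ({y₂, y} : Set X) ω
        omega
      · right; right
        intro t ht
        push_neg at hh2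
        have := hh2 t ht
        intro hmem
        rcases Finset.mem_insert.mp hmem with hm1 | hm2
        · exact this (by simp [hm1])
        · exact this (by simp [Finset.mem_singleton.mp hm2])
    · exact measure_union_null hNH1 hNH2y
  -- event ED
  have hPD : P y {ω | retTime {y₁, y₂} ω < retTime {y} ω}
      = P y (⋃ k : ℕ, HitSet F0 {y₁, y₂} (k+1)) := by
    refine meas_eq_of_symmdiff (N := {ω : ℕ → X | ∀ t, 0 < t → ω t ∉ ({y₁} : Finset X)}
      ∪ {ω : ℕ → X | ∀ t, 0 < t → ω t ∉ ({y} : Finset X)}) ?_ ?_ ?_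
    · intro ω hω
      by_cases hh : ∃ t, 0 < t ∧ ω t ∈ ({y₁, y₂} : Set X)
      · left
        obtain ⟨hpos, hmem⟩ := retTime_spec hh
        refine Set.mem_iUnion.mpr ⟨retTime ({y₁, y₂} : Set X) ω - 1, ?_⟩
        have hn : retTime ({y₁, y₂} : Set X) ω - 1 + 1 = retTime ({y₁, y₂} : Set X) ω := by
          omega
        constructor
        · rw [hn]
          rcases Set.mem_insert_iff.mp hmem with hm1 | hm2
          · simp [hm1]
          · simp [Set.mem_singleton_iff.mp hm2]
        · intro i hi1 hi2
          rw [hn] at hi2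
          intro hiF
          rcases Finset.mem_insert.mp hiF with hiy | hrest
          · have : ω i ∈ ({y} : Set X) := by simp [hiy]
            have := retTime_le (A := ({y} : Set X)) hi1 this
            have hlt : retTime ({y₁, y₂} : Set X) ω < retTime ({y} : Set X) ω := hω
            omega
          · refine retTime_min hi1 hi2 ?_
            rcases Finset.mem_insert.mp hrest with hiy1 | hiy2
            · simp [hiy1]
            · simp [Finset.mem_singleton.mp hiy2]
      · right; left
        intro t ht
        push_neg at hh
        have := hh t ht
        intro hmem
        exact this (by simp [Finset.mem_singleton.mp hmem])
    · intro ω hω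
      obtain ⟨k, hG, hav⟩ := Set.mem_iUnion.mp hω
      have hky12 : ω (k+1) = y₁ ∨ ω (k+1) = y₂ := by
        rcases Finset.mem_insert.mp hG with hm1 | hm2
        · exact Or.inl hm1
        · exact Or.inr (Finset.mem_singleton.mp hm2)
      by_cases hh2 : ∃ t, 0 < t ∧ ω t ∈ ({y} : Set X)
      · left
        obtain ⟨ht2pos, ht2mem⟩ := retTime_spec hh2
        have hle : retTime ({y₁, y₂} : Set X) ω ≤ k+1 := by
          refine retTime_le (by omega) ?_
          rcases hky12 with hm | hm
          · simp [hm]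
          · simp [hm]
        have hgt : k+1 < retTime ({y} : Set X) ω := by
          by_contra hcon
          push_neg at hcon
          rcases Nat.lt_or_ge (retTime ({y} : Set X) ω) (k+1) with hlt | hge
          · refine hav _ ht2pos hlt ?_
            simp [hF0def, Set.mem_singleton_iff.mp ht2mem]
          · have heq : retTime ({y} : Set X) ω = k+1 := by omega
            rw [heq] at ht2mem
            have hy : ω (k+1) = y := Set.mem_singleton_iff.mp ht2mem
            rcases hky12 with hm | hm
            · exact h1 (by rw [← hy, hm])
            · exact h2 (by rw [← hy, hm])
        show retTime ({y₁, y₂} : Set X) ω < retTime ({y} : Set X) ω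
        omega
      · right; right
        intro t ht
        push_neg at hh2
        have := hh2 t ht
        intro hmem
        exact this (by simp [Finset.mem_singleton.mp hmem])
    · exact measure_union_null hNH1 hNHy
  -- series values of the three events
  have hG1F2 : ∀ z ∈ ({y₁} : Finset X), z ∈ F2 := by
    intro z hz
    rw [Finset.mem_singleton.mp hz]
    simp [hF2def]
  have hG1F0 : ∀ z ∈ ({y₁} : Finset X), z ∈ F0 := by
    intro z hz
    rw [Finset.mem_singleton.mp hz]
    simp [hF0def]
  have hG12F0 : ∀ z ∈ ({y₁, y₂} : Finset X), z ∈ F0 := by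
    intro z hz
    rcases Finset.mem_insert.mp hz with hm | hm
    · simp [hF0def, hm]
    · simp [hF0def, Finset.mem_singleton.mp hm]
  have hPEval : P y {ω | retTime {y₁} ω < retTime {y₂} ω} = ENNReal.ofReal a := by
    rw [hPE, meas_hit_union P hms hprob hP hnn F2 {y₁} hG1F2 y]
    rw [hadef, ENNReal.ofReal_tsum_of_nonneg hαnn hαsum]
  have hPBval : P y {ω | retTime {y₁} ω < retTime {y₂, y} ω} = ENNReal.ofReal b := by
    rw [hPB, meas_hit_union P hms hprob hP hnn F0 {y₁} hG1F0 y]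
    rw [hbdef, ENNReal.ofReal_tsum_of_nonneg hβnn hβsum]
  have hPDval : P y {ω | retTime {y₁, y₂} ω < retTime {y} ω} = ENNReal.ofReal d := by
    rw [hPD, meas_hit_union P hms hprob hP hnn F0 {y₁, y₂} hG12F0 y]
    rw [hddef, ENNReal.ofReal_tsum_of_nonneg hδnn hδsum]
  -- final arithmetic
  rw [hPEval, hPBval, hPDval, ENNReal.toReal_ofReal hann, ENNReal.toReal_ofReal hbnn,
    ENNReal.toReal_ofReal hdnn]
  have hb_eq : b = a * d := by
    have : r = 1 - d := by linarith
    rw [this] at hren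
    linarith [hren]
  rw [hb_eq]
  field_simp
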